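/- arXiv:0905.4482 — 4 statements merged into one kernel-verified Lean document; each statement's English description precedes it below -/
import Mathlib

section
/- (Halting II.) Let Φ be an m×d real matrix with restricted isometry constant δ_{2s} ≤ 0.1. Let x, a ∈ ℝ^d be s-sparse vectors, let e ∈ ℝ^m, set r = x − a, v = Φr + e, and y = Φ*v. Then: (i) if ‖x − a‖₂ ≤ 0.95 (ε − ‖e‖₂) then ‖v‖₂ ≤ ε; (ii) if ‖x − a‖_∞ ≤ 0.45 η/s − 0.68 ‖e‖₂/√s then ‖y‖_∞ ≤ η/√(2s). -/
/-- The Euclidean (ℓ2) norm of a finitely-indexed real vector. -/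
noncomputable def l2 {ι : Type*} [Fintype ι] (v : ι → ℝ) : ℝ :=
  Real.sqrt (∑ i, (v i) ^ 2)

/-- The supremum (ℓ∞) norm of a finitely-indexed real vector. -/
noncomputable def linf {ι : Type*} [Fintype ι] (v : ι → ℝ) : ℝ :=
  ⨆ i, |v i|

/-- A vector is `s`-sparse if it has at most `s` nonzero coordinates. -/
def Sparse {d : ℕ} (s : ℕ) (v : Fin d → ℝ) : Prop :=
  {i | v i ≠ 0}.ncard ≤ s

/-- `δ` satisfies the restricted isometry inequalities of `Φ` at sparsity level `r`
(quadratic form); `δ_r ≤ δ` is equivalent to this (for `δ ≥ 0`). -/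
def RICq {m d : ℕ} (Φ : Matrix (Fin m) (Fin d) ℝ) (r : ℕ) (δ : ℝ) : Prop :=
  ∀ v : Fin d → ℝ, Sparse r v →
    (1 - δ) * (l2 v) ^ 2 ≤ (l2 (Φ.mulVec v)) ^ 2 ∧
      (l2 (Φ.mulVec v)) ^ 2 ≤ (1 + δ) * (l2 v) ^ 2

namespace Stmt14A

lemma l2_nonneg {ι : Type*} [Fintype ι] (v : ι → ℝ) : 0 ≤ l2 v := Real.sqrt_nonneg _

lemma l2_sq {ι : Type*} [Fintype ι] (v : ι → ℝ) : l2 v ^ 2 = ∑ i, v i ^ 2 :=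
  Real.sq_sqrt (by positivity)

lemma l2_le {ι : Type*} [Fintype ι] {v : ι → ℝ} {c : ℝ} (hc : 0 ≤ c)
    (h : ∑ i, v i ^ 2 ≤ c ^ 2) : l2 v ≤ c := by
  rw [l2]
  calc Real.sqrt (∑ i, v i ^ 2) ≤ Real.sqrt (c ^ 2) := Real.sqrt_le_sqrt h
  _ = c := Real.sqrt_sq hc

lemma abs_dot_le {ι : Type*} [Fintype ι] (u v : ι → ℝ) :
    |∑ i, u i * v i| ≤ l2 u * l2 v := by
  have h := Finset.sum_mul_sq_le_sq_mul_sq Finset.univ u v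
  have hu := l2_sq u
  have hv := l2_sq v
  have h0 : (0:ℝ) ≤ l2 u * l2 v := mul_nonneg (l2_nonneg u) (l2_nonneg v)
  rw [abs_le]
  constructor <;> nlinarith

lemma l2_add_le {ι : Type*} [Fintype ι] (u v : ι → ℝ) :
    l2 (u + v) ≤ l2 u + l2 v := by
  apply l2_le (add_nonneg (l2_nonneg u) (l2_nonneg v))
  have hexp : ∑ i, (u + v) i ^ 2
      = (∑ i, u i ^ 2) + (∑ i, v i ^ 2) + 2 * ∑ i, u i * v i := by
    calc ∑ i, (u + v) i ^ 2 = ∑ i, (u i ^ 2 + v i ^ 2 + 2 * (u i * v i)) :=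
          Finset.sum_congr rfl fun i _ => by simp only [Pi.add_apply]; ring
    _ = _ := by rw [Finset.sum_add_distrib, Finset.sum_add_distrib, ← Finset.mul_sum]
  have hd := abs_dot_le u v
  have hu := l2_sq u
  have hv := l2_sq v
  have := le_abs_self (∑ i, u i * v i)
  nlinarith [l2_nonneg u, l2_nonneg v]

variable {m d : ℕ}

lemma sparse_of_subset {N : ℕ} {v : Fin d → ℝ} {S : Set (Fin d)}
    (hsub : {j | v j ≠ 0} ⊆ S) (hS : S.ncard ≤ N) : Sparse N v :=
  le_trans (Set.ncard_le_ncard hsub (Set.toFinite _)) hS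

lemma sum_sq_add {ι : Type*} [Fintype ι] (u v : ι → ℝ) :
    ∑ i, (u + v) i ^ 2 = (∑ i, u i ^ 2) + (∑ i, v i ^ 2) + 2 * ∑ i, u i * v i := by
  calc ∑ i, (u + v) i ^ 2 = ∑ i, (u i ^ 2 + v i ^ 2 + 2 * (u i * v i)) :=
        Finset.sum_congr rfl fun i _ => by simp only [Pi.add_apply]; ring
  _ = _ := by rw [Finset.sum_add_distrib, Finset.sum_add_distrib, ← Finset.mul_sum]

lemma sum_sq_sub {ι : Type*} [Fintype ι] (u v : ι → ℝ) :
    ∑ i, (u - v) i ^ 2 = (∑ i, u i ^ 2) + (∑ i, v i ^ 2) - 2 * ∑ i, u i * v i := by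
  calc ∑ i, (u - v) i ^ 2 = ∑ i, (u i ^ 2 + v i ^ 2 - 2 * (u i * v i)) :=
        Finset.sum_congr rfl fun i _ => by simp only [Pi.sub_apply]; ring
  _ = _ := by rw [Finset.sum_sub_distrib, Finset.sum_add_distrib, ← Finset.mul_sum]

lemma ip_bound {N : ℕ} {δ : ℝ} {Φ : Matrix (Fin m) (Fin d) ℝ} (hΦ : RICq Φ N δ)
    (u v : Fin d → ℝ) (h : {j | u j ≠ 0 ∨ v j ≠ 0}.ncard ≤ N) :
    |(∑ j, (Φ.mulVec u) j * (Φ.mulVec v) j) - ∑ j, u j * v j|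
      ≤ δ / 2 * ((∑ j, u j ^ 2) + ∑ j, v j ^ 2) := by
  have hadd : Sparse N (u + v) := by
    refine sparse_of_subset (fun j hj => ?_) h
    by_contra hc
    simp only [Set.mem_setOf_eq, not_or, ne_eq, not_not] at hc
    exact hj (by simp only [Pi.add_apply, hc.1, hc.2, add_zero])
  have hsub : Sparse N (u - v) := by
    refine sparse_of_subset (fun j hj => ?_) h
    by_contra hc
    simp only [Set.mem_setOf_eq, not_or, ne_eq, not_not] at hc
    exact hj (by simp only [Pi.sub_apply, hc.1, hc.2, sub_zero])
  have h1 := hΦ (u + v) hadd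
  have h2 := hΦ (u - v) hsub
  rw [Matrix.mulVec_add, l2_sq, l2_sq, sum_sq_add, sum_sq_add] at h1
  rw [Matrix.mulVec_sub, l2_sq, l2_sq, sum_sq_sub, sum_sq_sub] at h2
  rw [abs_le]
  constructor <;> linarith [h1.1, h1.2, h2.1, h2.2]

lemma sum_sq_eq_zero {ι : Type*} [Fintype ι] {u : ι → ℝ} (h : ∑ i, u i ^ 2 = 0) :
    u = 0 := by
  funext i
  have := (Finset.sum_eq_zero_iff_of_nonneg (fun j _ => sq_nonneg (u j))).mp h i
    (Finset.mem_univ i)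
  exact pow_eq_zero_iff (n := 2) (by norm_num) |>.mp this

lemma ip_prod {N : ℕ} {δ : ℝ} {Φ : Matrix (Fin m) (Fin d) ℝ} (hΦ : RICq Φ N δ)
    (hδ : 0 ≤ δ) (u v : Fin d → ℝ) (h : {j | u j ≠ 0 ∨ v j ≠ 0}.ncard ≤ N) :
    |(∑ j, (Φ.mulVec u) j * (Φ.mulVec v) j) - ∑ j, u j * v j|
      ≤ δ * l2 u * l2 v := by
  have hQu0 : 0 ≤ ∑ j, u j ^ 2 := Finset.sum_nonneg fun j _ => sq_nonneg _
  have hQv0 : 0 ≤ ∑ j, v j ^ 2 := Finset.sum_nonneg fun j _ => sq_nonneg _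
  rcases eq_or_lt_of_le hQu0 with hQu | hQu
  · have : u = 0 := sum_sq_eq_zero hQu.symm
    subst this
    simp only [Matrix.mulVec_zero, Pi.zero_apply, zero_mul, Finset.sum_const_zero,
      sub_zero, abs_zero]
    exact mul_nonneg (mul_nonneg hδ (l2_nonneg _)) (l2_nonneg _)
  rcases eq_or_lt_of_le hQv0 with hQv | hQv
  · have : v = 0 := sum_sq_eq_zero hQv.symm
    subst this
    simp only [Matrix.mulVec_zero, Pi.zero_apply, mul_zero, Finset.sum_const_zero,
      sub_zero, abs_zero]
    exact mul_nonneg (mul_nonneg hδ (l2_nonneg _)) (l2_nonneg _)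
  set α := Real.sqrt (∑ j, u j ^ 2) with hα
  set β := Real.sqrt (∑ j, v j ^ 2) with hβ
  have hα0 : 0 < α := Real.sqrt_pos.mpr hQu
  have hβ0 : 0 < β := Real.sqrt_pos.mpr hQv
  have hα2 : α ^ 2 = ∑ j, u j ^ 2 := Real.sq_sqrt hQu0
  have hβ2 : β ^ 2 = ∑ j, v j ^ 2 := Real.sq_sqrt hQv0
  set c := Real.sqrt (β / α) with hc
  have hc0 : 0 < c := Real.sqrt_pos.mpr (div_pos hβ0 hα0)
  have hc2 : c ^ 2 = β / α := Real.sq_sqrt (le_of_lt (div_pos hβ0 hα0))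
  have hset : {j | (c • u) j ≠ 0 ∨ (c⁻¹ • v) j ≠ 0} = {j | u j ≠ 0 ∨ v j ≠ 0} := by
    ext j
    simp [Pi.smul_apply, smul_eq_mul, mul_ne_zero_iff, hc0.ne', inv_ne_zero hc0.ne']
  have key := ip_bound hΦ (c • u) (c⁻¹ • v) (by rw [hset]; exact h)
  have e1 : ∑ j, (Φ.mulVec (c • u)) j * (Φ.mulVec (c⁻¹ • v)) j
      = ∑ j, (Φ.mulVec u) j * (Φ.mulVec v) j := by
    rw [Matrix.mulVec_smul, Matrix.mulVec_smul]
    refine Finset.sum_congr rfl fun j _ => ?_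
    simp only [Pi.smul_apply, smul_eq_mul]
    field_simp
  have e2 : ∑ j, (c • u) j * (c⁻¹ • v) j = ∑ j, u j * v j := by
    refine Finset.sum_congr rfl fun j _ => ?_
    simp only [Pi.smul_apply, smul_eq_mul]
    field_simp
  have e3 : ∑ j, (c • u) j ^ 2 = c ^ 2 * ∑ j, u j ^ 2 := by
    rw [Finset.mul_sum]
    exact Finset.sum_congr rfl fun j _ => by simp only [Pi.smul_apply, smul_eq_mul]; ring
  have e4 : ∑ j, (c⁻¹ • v) j ^ 2 = (c ^ 2)⁻¹ * ∑ j, v j ^ 2 := by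
    rw [Finset.mul_sum]
    refine Finset.sum_congr rfl fun j _ => ?_
    simp only [Pi.smul_apply, smul_eq_mul]
    rw [mul_pow, inv_pow]
  have e5 : c ^ 2 * ∑ j, u j ^ 2 = α * β := by
    rw [hc2, ← hα2]
    field_simp
  have e6 : (c ^ 2)⁻¹ * ∑ j, v j ^ 2 = α * β := by
    rw [hc2, ← hβ2]
    field_simp
  rw [e1, e2, e3, e4, e5, e6] at key
  calc |(∑ j, (Φ.mulVec u) j * (Φ.mulVec v) j) - ∑ j, u j * v j|
      ≤ δ / 2 * (α * β + α * β) := key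
  _ = δ * l2 u * l2 v := by rw [show l2 u = α from rfl, show l2 v = β from rfl]; ring

end Stmt14A

set_option maxHeartbeats 1000000 in
/-- **Halting II.** Suppose `δ_{2s} ≤ 0.1`. For `s`-sparse `x, a`, with
`r = x − a`, `v = Φr + e` and `y = Φ*v`:
(i) if `‖x − a‖₂ ≤ 0.95 (ε − ‖e‖₂)` then `‖v‖₂ ≤ ε`;
(ii) if `‖x − a‖_∞ ≤ 0.45 η/s − 0.68 ‖e‖₂/√s` then `‖y‖_∞ ≤ η/√(2s)`. -/
theorem stmt14 (m d s : ℕ) (hs : 0 < s)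
    (Φ : Matrix (Fin m) (Fin d) ℝ) (hΦ : RICq Φ (2 * s) (1 / 10))
    (x a : Fin d → ℝ) (hx : Sparse s x) (ha : Sparse s a) (e : Fin m → ℝ)
    (ε η : ℝ) :
    (l2 (x - a) ≤ 0.95 * (ε - l2 e) → l2 (Φ.mulVec (x - a) + e) ≤ ε) ∧
    (linf (x - a) ≤ 0.45 * η / (s : ℝ) - 0.68 * l2 e / Real.sqrt (s : ℝ) →
      linf (Φ.transpose.mulVec (Φ.mulVec (x - a) + e)) ≤ η / Real.sqrt (2 * (s : ℝ))) := by
  classical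
  set r : Fin d → ℝ := x - a with hrdef
  have hE0 : 0 ≤ l2 e := Stmt14A.l2_nonneg e
  have hδ : (0:ℝ) ≤ 1/10 := by norm_num
  have hx' : {i | x i ≠ 0}.ncard ≤ s := hx
  have ha' : {i | a i ≠ 0}.ncard ≤ s := ha
  have hsparse_r : Sparse (2*s) r := by
    refine Stmt14A.sparse_of_subset (S := {i | x i ≠ 0} ∪ {i | a i ≠ 0}) ?_ ?_
    · intro j hj
      by_contra hc
      simp only [Set.mem_union, Set.mem_setOf_eq, not_or, ne_eq, not_not] at hc
      exact hj (by simp only [hrdef, Pi.sub_apply, hc.1, hc.2, sub_zero])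
    · calc ({i | x i ≠ 0} ∪ {i | a i ≠ 0}).ncard
          ≤ {i | x i ≠ 0}.ncard + {i | a i ≠ 0}.ncard := Set.ncard_union_le _ _
      _ ≤ 2*s := by omega
  -- the two square-root constants
  set q : ℝ := Real.sqrt (11/10) with hqdef
  have hq0 : 0 ≤ q := Real.sqrt_nonneg _
  have hq2 : q ^ 2 = 11/10 := Real.sq_sqrt (by norm_num)
  have hqle : q ≤ 1.049 := by nlinarith [sq_nonneg (q - 1.049)]
  constructor
  · -- part (i)
    intro hyp
    have hup := (hΦ r hsparse_r).2
    have h1 : l2 (Φ.mulVec r + e) ≤ l2 (Φ.mulVec r) + l2 e := Stmt14A.l2_add_le _ _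
    have hr0 : 0 ≤ l2 r := Stmt14A.l2_nonneg r
    have hΦr0 : 0 ≤ l2 (Φ.mulVec r) := Stmt14A.l2_nonneg _
    have hΦr : l2 (Φ.mulVec r) ≤ q * l2 r := by
      have h5 : l2 (Φ.mulVec r) ^ 2 ≤ (q * l2 r) ^ 2 := by
        rw [mul_pow, hq2]; linarith
      exact (pow_le_pow_iff_left₀ hΦr0 (mul_nonneg hq0 hr0) two_ne_zero).mp h5
    have hεE : 0 ≤ ε - l2 e := by nlinarith
    have h2 : q * l2 r ≤ q * (0.95 * (ε - l2 e)) :=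
      mul_le_mul_of_nonneg_left hyp hq0
    nlinarith [mul_nonneg (sub_nonneg.mpr hqle) hεE]
  · -- part (ii)
    intro hyp
    set E := l2 e with hEdef
    set ρ := linf r with hρdef
    set R := l2 r with hRdef
    have hR0 : 0 ≤ R := Stmt14A.l2_nonneg r
    set t : ℝ := Real.sqrt (s:ℝ) with htdef
    have hts : ((s:ℕ):ℝ) = t ^ 2 := (Real.sq_sqrt (Nat.cast_nonneg s)).symm
    have ht1 : 1 ≤ t := by
      have h1s : (1:ℝ) ≤ (s:ℝ) := by exact_mod_cast hs
      nlinarith [Real.sqrt_nonneg (s:ℝ)]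
    have ht0 : 0 < t := lt_of_lt_of_le one_pos ht1
    set w : ℝ := Real.sqrt 2 with hwdef
    have hw0 : 0 ≤ w := Real.sqrt_nonneg _
    have hw2 : w ^ 2 = 2 := Real.sq_sqrt (by norm_num)
    have hwle : w ≤ 1.415 := by nlinarith [sq_nonneg (w - 1.415)]
    have hsqrt2s : Real.sqrt (2 * (s:ℝ)) = w * t := by
      rw [hwdef, htdef, ← Real.sqrt_mul (by norm_num : (0:ℝ) ≤ 2)]
    rcases Nat.eq_zero_or_pos d with rfl | hd
    · -- degenerate case `d = 0`
      have hρz : ρ = 0 := by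
        rw [hρdef, linf]; exact Real.iSup_of_isEmpty _
      have hyz : linf (Φ.transpose.mulVec (Φ.mulVec r + e)) = 0 := by
        rw [linf]; exact Real.iSup_of_isEmpty _
      rw [hyz]
      rw [hρz, hts] at hyp
      have hE' : 0 ≤ 0.68 * E / t := div_nonneg (by nlinarith) ht0.le
      have hη : 0 ≤ η := by
        by_contra hneg
        push_neg at hneg
        have : 0.45 * η / t ^ 2 < 0 :=
          div_neg_of_neg_of_pos (by linarith) (by positivity)
        linarith
      exact div_nonneg hη (Real.sqrt_nonneg _)
    · have hne : Nonempty (Fin d) := ⟨⟨0, hd⟩⟩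
      have habs : ∀ i, |r i| ≤ ρ := fun i => by
        rw [hρdef, linf]
        exact le_ciSup (f := fun i => |r i|) (Set.Finite.bddAbove (Set.finite_range _)) i
      have hρ0 : 0 ≤ ρ := le_trans (abs_nonneg _) (habs ⟨0, hd⟩)
      -- ℓ2–ℓ∞ comparison through sparsity
      have hRsq : R ^ 2 ≤ 2 * t ^ 2 * ρ ^ 2 := by
        rw [hRdef, Stmt14A.l2_sq]
        have hfilter : ∑ i, r i ^ 2
            = ∑ i ∈ Finset.univ.filter (fun i => r i ≠ 0), r i ^ 2 :=
          (Finset.sum_filter_of_ne fun i _ hne' => by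
            intro h0
            exact hne' (by rw [h0]; ring)).symm
        have hcard : (Finset.univ.filter fun i => r i ≠ 0).card ≤ 2*s := by
          have hn : {i | r i ≠ 0}.ncard
              = (Finset.univ.filter fun i => r i ≠ 0).card := by
            rw [Set.ncard_eq_toFinset_card']
            congr 1
            ext i
            simp
          exact hn ▸ hsparse_r
        have hbound : ∑ i ∈ Finset.univ.filter (fun i => r i ≠ 0), r i ^ 2
            ≤ ((Finset.univ.filter fun i => r i ≠ 0).card : ℝ) * ρ ^ 2 := by
          have := Finset.sum_le_card_nsmul (Finset.univ.filter fun i => r i ≠ 0)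
            (fun i => r i ^ 2) (ρ ^ 2)
            (fun i _ => by
              show r i ^ 2 ≤ ρ ^ 2
              have h1 : r i ^ 2 = |r i| ^ 2 := (sq_abs _).symm
              rw [h1]
              exact pow_le_pow_left₀ (abs_nonneg _) (habs i) 2)
          simpa [nsmul_eq_mul] using this
        have hcast : ((Finset.univ.filter fun i => r i ≠ 0).card : ℝ) ≤ 2 * t ^ 2 := by
          rw [← hts]
          exact_mod_cast hcard
        nlinarith [sq_nonneg ρ]
      have hRle : R ≤ w * t * ρ := by
        have hwt0 : 0 ≤ w * t * ρ := mul_nonneg (mul_nonneg hw0 ht0.le) hρ0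
        have h5 : R ^ 2 ≤ (w * t * ρ) ^ 2 := by
          have h6 : (w * t * ρ) ^ 2 = w ^ 2 * (t ^ 2 * ρ ^ 2) := by ring
          rw [h6, hw2]; nlinarith [hRsq]
        exact (pow_le_pow_iff_left₀ hR0 hwt0 two_ne_zero).mp h5
      -- per-coordinate bound
      set v : Fin m → ℝ := Φ.mulVec r + e with hvdef
      set B : ℝ := 11/10 * ρ + 1/5 * R + q * E with hBdef
      have hyB : ∀ i, |Φ.transpose.mulVec v i| ≤ B := by
        intro i
        set g : Fin d → ℝ := Pi.single i 1 with hgdef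
        set r₁ : Fin d → ℝ := fun j => if j ≠ i ∧ x j ≠ 0 then r j else 0 with hr1def
        set r₂ : Fin d → ℝ := fun j => if j ≠ i ∧ x j = 0 then r j else 0 with hr2def
        have hdecomp : r = r i • g + r₁ + r₂ := by
          funext j
          by_cases hji : j = i
          · subst hji
            simp [hgdef, hr1def, hr2def]
          · by_cases hxj : x j = 0 <;>
              simp [hgdef, hr1def, hr2def, hji, hxj, Pi.single_eq_of_ne hji]
        -- supports
        have hQg : ∑ j, g j ^ 2 = 1 := by
          have h1 : ∀ j, g j ^ 2 = if j = i then (1:ℝ) else 0 := fun j => by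
            rcases eq_or_ne j i with h | h
            · subst h; simp [hgdef]
            · simp [hgdef, Pi.single_eq_of_ne h, h]
          rw [Finset.sum_congr rfl fun j _ => h1 j, Finset.sum_ite_eq' Finset.univ i]
          simp
        have hgsupp : ∀ j, g j ≠ 0 → j = i := by
          intro j hj
          by_contra hji
          exact hj (by simp [hgdef, Pi.single_eq_of_ne hji])
        have hsg : Sparse (2*s) g := by
          refine Stmt14A.sparse_of_subset (S := {i}) (fun j hj => hgsupp j hj) ?_
          rw [Set.ncard_singleton]; omega
        have hS1 : {j | g j ≠ 0 ∨ r₁ j ≠ 0}.ncard ≤ 2*s := by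
          have hsub : {j | g j ≠ 0 ∨ r₁ j ≠ 0} ⊆ insert i {j | x j ≠ 0} := by
            rintro j (hj | hj)
            · exact Set.mem_insert_iff.mpr (Or.inl (hgsupp j hj))
            · right
              rw [hr1def] at hj
              simp only at hj
              by_contra hxj
              simp only [Set.mem_setOf_eq, not_not] at hxj
              exact hj (by simp [hxj])
          calc {j | g j ≠ 0 ∨ r₁ j ≠ 0}.ncard
              ≤ (insert i {j | x j ≠ 0}).ncard :=
                Set.ncard_le_ncard hsub (Set.toFinite _)
          _ ≤ {j | x j ≠ 0}.ncard + 1 := Set.ncard_insert_le _ _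
          _ ≤ 2*s := by omega
        have hS2 : {j | g j ≠ 0 ∨ r₂ j ≠ 0}.ncard ≤ 2*s := by
          have hsub : {j | g j ≠ 0 ∨ r₂ j ≠ 0} ⊆ insert i {j | a j ≠ 0} := by
            rintro j (hj | hj)
            · exact Set.mem_insert_iff.mpr (Or.inl (hgsupp j hj))
            · right
              rw [hr2def] at hj
              simp only at hj
              by_cases hcond : j ≠ i ∧ x j = 0
              · rw [if_pos hcond] at hj
                simp only [Set.mem_setOf_eq]
                intro haj
                exact hj (by simp [hrdef, Pi.sub_apply, hcond.2, haj])
              · rw [if_neg hcond] at hj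
                exact absurd rfl hj
          calc {j | g j ≠ 0 ∨ r₂ j ≠ 0}.ncard
              ≤ (insert i {j | a j ≠ 0}).ncard :=
                Set.ncard_le_ncard hsub (Set.toFinite _)
          _ ≤ {j | a j ≠ 0}.ncard + 1 := Set.ncard_insert_le _ _
          _ ≤ 2*s := by omega
        -- dot products with g vanish
        have hdot1 : ∑ j, g j * r₁ j = 0 := by
          apply Finset.sum_eq_zero
          intro j _
          rcases eq_or_ne j i with h | h
          · subst h; simp [hr1def]
          · simp [hgdef, Pi.single_eq_of_ne h]
        have hdot2 : ∑ j, g j * r₂ j = 0 := by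
          apply Finset.sum_eq_zero
          intro j _
          rcases eq_or_ne j i with h | h
          · subst h; simp [hr2def]
          · simp [hgdef, Pi.single_eq_of_ne h]
        -- l2 facts
        have hl2g : l2 g = 1 := by rw [l2, hQg, Real.sqrt_one]
        have hl2r1 : l2 r₁ ≤ R := by
          rw [hRdef, l2, l2]
          apply Real.sqrt_le_sqrt
          apply Finset.sum_le_sum
          intro j _
          rw [hr1def]
          by_cases hcond : j ≠ i ∧ x j ≠ 0
          · simp [hcond]
          · simp [hcond, sq_nonneg]
        have hl2r2 : l2 r₂ ≤ R := by
          rw [hRdef, l2, l2]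
          apply Real.sqrt_le_sqrt
          apply Finset.sum_le_sum
          intro j _
          rw [hr2def]
          by_cases hcond : j ≠ i ∧ x j = 0
          · simp [hcond]
          · simp [hcond, sq_nonneg]
        have hl2r10 : 0 ≤ l2 r₁ := Stmt14A.l2_nonneg _
        have hl2r20 : 0 ≤ l2 r₂ := Stmt14A.l2_nonneg _
        -- quadratic form bound on Φ g
        set c : Fin m → ℝ := Φ.mulVec g with hcdef
        have hQc0 : 0 ≤ ∑ j, c j ^ 2 := Finset.sum_nonneg fun j _ => sq_nonneg _
        have hQc : ∑ j, c j ^ 2 ≤ 11/10 := by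
          have := (hΦ g hsg).2
          rw [Stmt14A.l2_sq, Stmt14A.l2_sq, hQg] at this
          rw [hcdef]
          linarith
        -- main decomposition of the coordinate
        have hyi : Φ.transpose.mulVec v i = ∑ j, c j * v j := by
          have hcol : c = fun j => Φ j i := by
            funext j
            rw [hcdef, hgdef]
            simp
          rw [hcol]
          simp [Matrix.mulVec, dotProduct, Matrix.transpose_apply]
        have hΦrdec : Φ.mulVec r = r i • c + Φ.mulVec r₁ + Φ.mulVec r₂ := by
          rw [hcdef]
          conv_lhs => rw [hdecomp]
          rw [Matrix.mulVec_add, Matrix.mulVec_add, Matrix.mulVec_smul]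
        have hsplit : Φ.transpose.mulVec v i
            = r i * (∑ j, c j ^ 2) + (∑ j, c j * (Φ.mulVec r₁) j)
              + (∑ j, c j * (Φ.mulVec r₂) j) + ∑ j, c j * e j := by
          rw [hyi]
          calc ∑ j, c j * v j
              = ∑ j, (r i * c j ^ 2 + c j * (Φ.mulVec r₁) j
                  + c j * (Φ.mulVec r₂) j + c j * e j) := by
                refine Finset.sum_congr rfl fun j _ => ?_
                rw [hvdef, hΦrdec]
                simp only [Pi.add_apply, Pi.smul_apply, smul_eq_mul]
                ring
          _ = _ := by
                rw [Finset.sum_add_distrib, Finset.sum_add_distrib,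
                  Finset.sum_add_distrib, ← Finset.mul_sum]
        -- bounds for the four pieces
        have hT1 : |r i * (∑ j, c j ^ 2)| ≤ 11/10 * ρ := by
          rw [abs_mul, abs_of_nonneg hQc0]
          calc |r i| * (∑ j, c j ^ 2) ≤ ρ * (11/10) :=
            mul_le_mul (habs i) hQc hQc0 hρ0
          _ = 11/10 * ρ := by ring
        have hT2 : |∑ j, c j * (Φ.mulVec r₁) j| ≤ 1/10 * R := by
          have := Stmt14A.ip_prod hΦ hδ g r₁ hS1
          rw [hdot1, sub_zero, hl2g] at this
          rw [hcdef]
          calc |∑ j, (Φ.mulVec g) j * (Φ.mulVec r₁) j| ≤ 1/10 * 1 * l2 r₁ := this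
          _ ≤ 1/10 * R := by linarith
        have hT3 : |∑ j, c j * (Φ.mulVec r₂) j| ≤ 1/10 * R := by
          have := Stmt14A.ip_prod hΦ hδ g r₂ hS2
          rw [hdot2, sub_zero, hl2g] at this
          rw [hcdef]
          calc |∑ j, (Φ.mulVec g) j * (Φ.mulVec r₂) j| ≤ 1/10 * 1 * l2 r₂ := this
          _ ≤ 1/10 * R := by linarith
        have hT4 : |∑ j, c j * e j| ≤ q * E := by
          have hcs := Stmt14A.abs_dot_le c e
          have hl2c : l2 c ≤ q := by
            rw [l2, hqdef]
            exact Real.sqrt_le_sqrt hQc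
          calc |∑ j, c j * e j| ≤ l2 c * l2 e := hcs
          _ ≤ q * E := mul_le_mul_of_nonneg_right hl2c hE0
        rw [hsplit, hBdef]
        calc |r i * (∑ j, c j ^ 2) + (∑ j, c j * (Φ.mulVec r₁) j)
              + (∑ j, c j * (Φ.mulVec r₂) j) + ∑ j, c j * e j|
            ≤ |r i * (∑ j, c j ^ 2) + (∑ j, c j * (Φ.mulVec r₁) j)
              + (∑ j, c j * (Φ.mulVec r₂) j)| + |∑ j, c j * e j| := abs_add_le _ _
        _ ≤ |r i * (∑ j, c j ^ 2) + (∑ j, c j * (Φ.mulVec r₁) j)|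
              + |∑ j, c j * (Φ.mulVec r₂) j| + |∑ j, c j * e j| := by
            linarith [abs_add_le (r i * (∑ j, c j ^ 2) + (∑ j, c j * (Φ.mulVec r₁) j))
              (∑ j, c j * (Φ.mulVec r₂) j)]
        _ ≤ |r i * (∑ j, c j ^ 2)| + |∑ j, c j * (Φ.mulVec r₁) j|
              + |∑ j, c j * (Φ.mulVec r₂) j| + |∑ j, c j * e j| := by
            linarith [abs_add_le (r i * (∑ j, c j ^ 2)) (∑ j, c j * (Φ.mulVec r₁) j)]
        _ ≤ 11/10 * ρ + 1/5 * R + q * E := by linarith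
      -- final numeric bound
      have hρ' : ρ * t ^ 2 + 0.68 * E * t ≤ 0.45 * η := by
        rw [hts] at hyp
        have h3 := mul_le_mul_of_nonneg_right hyp (by positivity : (0:ℝ) ≤ t ^ 2)
        have h4 : (0.45 * η / t ^ 2 - 0.68 * E / t) * t ^ 2
            = 0.45 * η - 0.68 * E * t := by
          field_simp
        rw [h4] at h3
        linarith
      have hfinal : B ≤ η / Real.sqrt (2 * (s:ℝ)) := by
        rw [hsqrt2s, le_div_iff₀ (mul_pos (lt_of_lt_of_le one_pos (by nlinarith)) ht0)]
        have hwt0 : 0 ≤ w * t := mul_nonneg hw0 ht0.le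
        have c1 : (w*t) * R ≤ (w*t) * (w*t*ρ) := mul_le_mul_of_nonneg_left hRle hwt0
        have c1' : (w*t) * (w*t*ρ) = 2 * (t^2*ρ) := by
          have h : (w*t) * (w*t*ρ) = w^2 * (t^2*ρ) := by ring
          rw [h, hw2]
        have c2 : (w*t) * ρ ≤ 1.415 * (t*ρ) := by
          calc (w*t)*ρ = w*(t*ρ) := by ring
          _ ≤ 1.415 * (t*ρ) :=
            mul_le_mul_of_nonneg_right hwle (mul_nonneg ht0.le hρ0)
        have c3 : t * ρ ≤ t^2 * ρ := by nlinarith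
        have c4 : (q*(w*t)) * E ≤ (1.049 * 1.415) * (t*E) := by
          have hqw : q * w ≤ 1.049 * 1.415 :=
            mul_le_mul hqle hwle hw0 (by norm_num)
          calc (q*(w*t))*E = (q*w)*(t*E) := by ring
          _ ≤ (1.049*1.415)*(t*E) :=
            mul_le_mul_of_nonneg_right hqw (mul_nonneg ht0.le hE0)
        have htρ0 : 0 ≤ t^2*ρ := by positivity
        have htE0 : 0 ≤ t*E := mul_nonneg ht0.le hE0
        rw [hBdef]
        nlinarith [c1, c1', c2, c3, c4, hρ', htρ0, htE0]
      have hlin : linf (Φ.transpose.mulVec v) ≤ B := by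
        rw [linf]
        exact ciSup_le hyB
      exact le_trans hlin hfinal
end

section
/- Let Φ be an m×d real matrix with restricted isometry constant δ_{2s} = δ < √2 − 1. Let x, x̂, u be vectors with ‖Φx − u‖₂ ≤ ε and ‖Φx̂ − u‖₂ ≤ ε, and set h = x̂ − x. Let T₀ be a set of s coordinates of x of largest magnitude, and let T₁ be a set of s coordinates of h|_{T₀^c} of largest magnitude. Then ‖h|_{T₀∪T₁}‖₂ ≤ α ε + (ρ/√s) ‖h|_{T₀^c}‖₁, where ρ = √2 δ/(1−δ) and α = 2√(1+δ)/(1−δ). -/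
/-- The ℓ1 norm of a finitely-indexed real vector. -/
noncomputable def l1 {ι : Type*} [Fintype ι] (v : ι → ℝ) : ℝ :=
  ∑ i, |v i|

/-- The restriction of a vector to a set of coordinates (zero elsewhere). -/
def restr {d : ℕ} (S : Finset (Fin d)) (v : Fin d → ℝ) : Fin d → ℝ :=
  fun i => if i ∈ S then v i else 0

namespace S15

noncomputable def ip {ι : Type*} [Fintype ι] (a b : ι → ℝ) : ℝ := ∑ i, a i * b i

lemma l2_nonneg {ι : Type*} [Fintype ι] (v : ι → ℝ) : 0 ≤ l2 v := Real.sqrt_nonneg _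

lemma l2_sq {ι : Type*} [Fintype ι] (v : ι → ℝ) : l2 v ^ 2 = ∑ i, v i ^ 2 :=
  Real.sq_sqrt (Finset.sum_nonneg fun i _ => sq_nonneg _)

lemma ip_self {ι : Type*} [Fintype ι] (v : ι → ℝ) : ip v v = l2 v ^ 2 := by
  rw [l2_sq]; simp [ip, sq]

lemma l2_eq_zero {ι : Type*} [Fintype ι] {v : ι → ℝ} (h : l2 v = 0) : v = 0 := by
  have h2 : (∑ i, v i ^ 2) = 0 := by
    have := l2_sq v
    rw [h] at this; simpa using this.symm
  funext i
  have := (Finset.sum_eq_zero_iff_of_nonneg (fun i _ => sq_nonneg (v i))).mp h2 i (Finset.mem_univ i)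
  exact pow_eq_zero_iff (by norm_num) |>.mp this

lemma abs_ip_le {ι : Type*} [Fintype ι] (a b : ι → ℝ) : |ip a b| ≤ l2 a * l2 b := by
  have hcs := Finset.sum_mul_sq_le_sq_mul_sq Finset.univ a b
  rw [ip, ← Real.sqrt_sq_eq_abs, l2, l2,
    ← Real.sqrt_mul (Finset.sum_nonneg fun i _ => sq_nonneg (a i))]
  exact Real.sqrt_le_sqrt hcs

lemma l2_sub_le {ι : Type*} [Fintype ι] (a b : ι → ℝ) : l2 (a - b) ≤ l2 a + l2 b := by
  have key : ∀ v : ι → ℝ, l2 v = ‖(WithLp.equiv 2 (ι → ℝ)).symm v‖ := by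
    intro v
    rw [EuclideanSpace.norm_eq]
    simp [l2, Real.norm_eq_abs, sq_abs]
  rw [key, key, key]
  have : (WithLp.equiv 2 (ι → ℝ)).symm (a - b)
      = (WithLp.equiv 2 (ι → ℝ)).symm a - (WithLp.equiv 2 (ι → ℝ)).symm b := rfl
  rw [this]
  exact norm_sub_le _ _

lemma l2_smul {ι : Type*} [Fintype ι] (c : ℝ) (v : ι → ℝ) :
    l2 (fun i => c * v i) = |c| * l2 v := by
  rw [l2, l2]
  have : ∀ i : ι, (c * v i) ^ 2 = c ^ 2 * v i ^ 2 := fun i => by ring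
  simp_rw [this, ← Finset.mul_sum, Real.sqrt_mul (sq_nonneg c), Real.sqrt_sq_eq_abs]

lemma l2_zero {ι : Type*} [Fintype ι] : l2 (0 : ι → ℝ) = 0 := by simp [l2]

lemma sparse_of_subset {d s : ℕ} {v : Fin d → ℝ} {S : Finset (Fin d)}
    (h : ∀ i, v i ≠ 0 → i ∈ S) (hcard : S.card ≤ s) : Sparse s v := by
  unfold Sparse
  calc {i | v i ≠ 0}.ncard ≤ (↑S : Set (Fin d)).ncard :=
        Set.ncard_le_ncard (fun i hi => h i hi) S.finite_toSet
    _ = S.card := Set.ncard_coe_finset S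
    _ ≤ s := hcard

/-- Restricted orthogonality, "half sum of squares" form. -/
lemma halfsum {m d s : ℕ} {Φ : Matrix (Fin m) (Fin d) ℝ} {δ : ℝ}
    (hΦ : RICq Φ (2 * s) δ) (p q : Fin d → ℝ)
    (hd : ∀ i, p i = 0 ∨ q i = 0) (hsp : Sparse (2 * s) (p + q)) :
    |ip (Φ.mulVec p) (Φ.mulVec q)| ≤ δ * (l2 p ^ 2 + l2 q ^ 2) / 2 := by
  have hsm : Sparse (2 * s) (p - q) := by
    refine le_trans (Set.ncard_le_ncard ?_ (Set.toFinite _)) hsp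
    intro i hi
    rcases hd i with h0 | h0 <;> simp_all
  have hct : ∀ i, (p i + q i) ^ 2 = p i ^ 2 + q i ^ 2 ∧ (p i - q i) ^ 2 = p i ^ 2 + q i ^ 2 := by
    intro i; rcases hd i with h0 | h0 <;> rw [h0] <;> constructor <;> ring
  have hP : l2 (p + q) ^ 2 = l2 p ^ 2 + l2 q ^ 2 := by
    rw [l2_sq, l2_sq, l2_sq, ← Finset.sum_add_distrib]
    exact Finset.sum_congr rfl fun i _ => (hct i).1
  have hM : l2 (p - q) ^ 2 = l2 p ^ 2 + l2 q ^ 2 := by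
    rw [l2_sq, l2_sq, l2_sq, ← Finset.sum_add_distrib]
    exact Finset.sum_congr rfl fun i _ => (hct i).2
  have h4 : 4 * ip (Φ.mulVec p) (Φ.mulVec q)
      = l2 (Φ.mulVec (p + q)) ^ 2 - l2 (Φ.mulVec (p - q)) ^ 2 := by
    rw [l2_sq, l2_sq, Matrix.mulVec_add, Matrix.mulVec_sub, ip, Finset.mul_sum,
      ← Finset.sum_sub_distrib]
    refine Finset.sum_congr rfl fun i _ => ?_
    simp only [Pi.add_apply, Pi.sub_apply]
    ring
  obtain ⟨hl1, hu1⟩ := hΦ (p + q) hsp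
  obtain ⟨hl2, hu2⟩ := hΦ (p - q) hsm
  rw [hP] at hl1 hu1
  rw [hM] at hl2 hu2
  rw [abs_le]
  constructor <;> nlinarith [h4]

/-- Restricted orthogonality, product form. -/
lemma ip_prod {m d s : ℕ} {Φ : Matrix (Fin m) (Fin d) ℝ} {δ : ℝ}
    (hΦ : RICq Φ (2 * s) δ) (p q : Fin d → ℝ)
    (hd : ∀ i, p i = 0 ∨ q i = 0) (hsp : Sparse (2 * s) (p + q)) :
    |ip (Φ.mulVec p) (Φ.mulVec q)| ≤ δ * (l2 p * l2 q) := by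
  by_cases hp : l2 p = 0
  · rw [l2_eq_zero hp]
    simp [ip, Matrix.mulVec_zero, l2_zero]
  by_cases hq : l2 q = 0
  · rw [l2_eq_zero hq]
    simp [ip, Matrix.mulVec_zero, l2_zero]
  have hppos : 0 < l2 p := lt_of_le_of_ne (l2_nonneg p) (Ne.symm hp)
  have hqpos : 0 < l2 q := lt_of_le_of_ne (l2_nonneg q) (Ne.symm hq)
  set p' : Fin d → ℝ := fun i => l2 q * p i with hp'
  set q' : Fin d → ℝ := fun i => l2 p * q i with hq'
  have hd' : ∀ i, p' i = 0 ∨ q' i = 0 := by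
    intro i; rcases hd i with h0 | h0 <;> simp [hp', hq', h0]
  have hsp' : Sparse (2 * s) (p' + q') := by
    refine le_trans (Set.ncard_le_ncard ?_ (Set.toFinite _)) hsp
    intro i hi
    simp only [Set.mem_setOf_eq, Pi.add_apply, hp', hq'] at hi ⊢
    rcases hd i with h0 | h0
    · rw [h0, zero_add]
      simp only [h0, mul_zero, zero_add] at hi
      exact fun hc => hi (by rw [hc, mul_zero])
    · rw [h0, add_zero]
      simp only [h0, mul_zero, add_zero] at hi
      exact fun hc => hi (by rw [hc, mul_zero])
  have hkey := halfsum hΦ p' q' hd' hsp'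
  have hmul : ∀ (c : ℝ) (v : Fin d → ℝ),
      Φ.mulVec (fun i => c * v i) = fun i => c * Φ.mulVec v i := by
    intro c v
    funext j
    simp only [Matrix.mulVec, dotProduct, Finset.mul_sum]
    exact Finset.sum_congr rfl fun i _ => by ring
  have hip : ip (Φ.mulVec p') (Φ.mulVec q') = l2 q * l2 p * ip (Φ.mulVec p) (Φ.mulVec q) := by
    rw [hp', hq', hmul, hmul, ip, ip, Finset.mul_sum]
    exact Finset.sum_congr rfl fun i _ => by ring
  rw [hip] at hkey
  have hl2p' : l2 p' = l2 q * l2 p := by rw [hp', l2_smul, abs_of_nonneg (l2_nonneg q)]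
  have hl2q' : l2 q' = l2 p * l2 q := by rw [hq', l2_smul, abs_of_nonneg (l2_nonneg p)]
  rw [hl2p', hl2q', abs_mul, abs_mul, abs_of_nonneg (l2_nonneg q), abs_of_nonneg (l2_nonneg p)]
    at hkey
  have hpq : 0 < l2 p * l2 q := mul_pos hppos hqpos
  nlinarith [hkey]

/-- Restricted orthogonality for restrictions on disjoint index sets. -/
lemma ipB {m d s : ℕ} {Φ : Matrix (Fin m) (Fin d) ℝ} {δ : ℝ}
    (hΦ : RICq Φ (2 * s) δ) (A B : Finset (Fin d)) (hAB : Disjoint A B)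
    (hcard : A.card + B.card ≤ 2 * s) (a b : Fin d → ℝ) :
    |ip (Φ.mulVec (restr A a)) (Φ.mulVec (restr B b))| ≤ δ * (l2 (restr A a) * l2 (restr B b)) := by
  apply ip_prod hΦ
  · intro i
    by_cases hiA : i ∈ A
    · right
      have : i ∉ B := Finset.disjoint_left.mp hAB hiA
      simp [restr, this]
    · left; simp [restr, hiA]
  · refine sparse_of_subset (S := A ∪ B) ?_ (le_trans (Finset.card_union_le A B) hcard)
    intro i hi
    by_contra hc
    simp only [Finset.mem_union, not_or] at hc
    simp [restr, hc.1, hc.2] at hi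

/-- Extract a top-`k` subset w.r.t. a weight function. -/
lemma extract {d : ℕ} (g : Fin d → ℝ) :
    ∀ (k : ℕ) (R : Finset (Fin d)), k ≤ R.card →
      ∃ S, S ⊆ R ∧ S.card = k ∧ ∀ j ∈ R, j ∉ S → ∀ i ∈ S, g j ≤ g i := by
  intro k
  induction k with
  | zero => exact fun R _ => ⟨∅, by simp⟩
  | succ k ih =>
    intro R hk
    obtain ⟨S, hSR, hScard, hdom⟩ := ih R (le_trans (Nat.le_succ k) hk)
    have hne : (R \ S).Nonempty := by
      rw [← Finset.card_pos, Finset.card_sdiff_of_subset hSR]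
      omega
    obtain ⟨a, haRS, hamax⟩ := Finset.exists_max_image (R \ S) g hne
    have haR : a ∈ R := (Finset.mem_sdiff.mp haRS).1
    have haS : a ∉ S := (Finset.mem_sdiff.mp haRS).2
    refine ⟨insert a S, Finset.insert_subset haR hSR, ?_, ?_⟩
    · rw [Finset.card_insert_of_notMem haS, hScard]
    · intro j hjR hjS i hiS
      rcases Finset.mem_insert.mp hiS with rfl | hiS'
      · exact hamax j (Finset.mem_sdiff.mpr ⟨hjR, fun h => hjS (Finset.mem_insert_of_mem h)⟩)
      · exact hdom j hjR (fun h => hjS (Finset.mem_insert_of_mem h)) i hiS'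

/-- ℓ2 bound for a chunk dominated by the previous chunk. -/
lemma chunk_l2 {d s : ℕ} (hs : 0 < s) (h : Fin d → ℝ) (S P : Finset (Fin d))
    (hScard : S.card ≤ s) (hPcard : P.card = s)
    (hdom : ∀ i ∈ S, ∀ p ∈ P, |h i| ≤ |h p|) :
    l2 (restr S h) ≤ (Real.sqrt s)⁻¹ * ∑ p ∈ P, |h p| := by
  set M : ℝ := (∑ p ∈ P, |h p|) / s with hM
  have hMnn : 0 ≤ M := by
    apply div_nonneg (Finset.sum_nonneg fun p _ => abs_nonneg _)
    exact_mod_cast Nat.zero_le s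
  have hbound : ∀ i ∈ S, |h i| ≤ M := by
    intro i hiS
    rw [hM, le_div_iff₀ (by exact_mod_cast hs)]
    calc |h i| * s = ∑ _p ∈ P, |h i| := by
          rw [Finset.sum_const, hPcard, nsmul_eq_mul, mul_comm]
      _ ≤ ∑ p ∈ P, |h p| := Finset.sum_le_sum fun p hp => hdom i hiS p hp
  have hsum : (∑ i, (restr S h i) ^ 2) ≤ s * M ^ 2 := by
    have h1 : (∑ i, (restr S h i) ^ 2) = ∑ i ∈ S, (h i) ^ 2 := by
      rw [← Finset.sum_subset (Finset.subset_univ S)]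
      · exact Finset.sum_congr rfl fun i hi => by simp [restr, hi]
      · intro i _ hiS; simp [restr, hiS]
    rw [h1]
    calc (∑ i ∈ S, (h i) ^ 2) ≤ ∑ _i ∈ S, M ^ 2 := by
          refine Finset.sum_le_sum fun i hi => ?_
          rw [← sq_abs (h i)]
          exact pow_le_pow_left₀ (abs_nonneg _) (hbound i hi) 2
      _ = S.card * M ^ 2 := by rw [Finset.sum_const, nsmul_eq_mul]
      _ ≤ s * M ^ 2 := by
          apply mul_le_mul_of_nonneg_right _ (sq_nonneg M)
          exact_mod_cast hScard
  have hsq : l2 (restr S h) ≤ Real.sqrt (s * M ^ 2) := Real.sqrt_le_sqrt hsum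
  have hspos : (0:ℝ) < s := by exact_mod_cast hs
  calc l2 (restr S h) ≤ Real.sqrt (s * M ^ 2) := hsq
    _ = Real.sqrt s * M := by
        rw [Real.sqrt_mul (le_of_lt hspos), Real.sqrt_sq hMnn]
    _ = (Real.sqrt s)⁻¹ * ∑ p ∈ P, |h p| := by
        have hss : Real.sqrt s * Real.sqrt s = s := Real.mul_self_sqrt (le_of_lt hspos)
        have hsne : Real.sqrt s ≠ 0 := ne_of_gt (Real.sqrt_pos.mpr hspos)
        rw [hM]
        field_simp
        linear_combination (∑ p ∈ P, |h p|) * hss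

/-- Main inductive chunking claim. -/
lemma claimQ {m d s : ℕ} {Φ : Matrix (Fin m) (Fin d) ℝ} {δ : ℝ}
    (hδ0 : 0 ≤ δ) (hΦ : RICq Φ (2 * s) δ) (h : Fin d → ℝ) (T₀ T₁ : Finset (Fin d))
    (hT₀card : T₀.card = s) (hT₁card : T₁.card = s) (hs : 0 < s) :
    ∀ (n : ℕ) (R P : Finset (Fin d)), R.card ≤ n → P.card = s → Disjoint P R →
      Disjoint R (T₀ ∪ T₁) → (∀ i ∈ R, ∀ p ∈ P, |h i| ≤ |h p|) →
      |ip (Φ.mulVec (restr T₀ h)) (Φ.mulVec (restr R h))| +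
        |ip (Φ.mulVec (restr T₁ h)) (Φ.mulVec (restr R h))| ≤
      δ * (l2 (restr T₀ h) + l2 (restr T₁ h)) * ((Real.sqrt s)⁻¹ * ∑ i ∈ P ∪ R, |h i|) := by
  intro n
  induction n with
  | zero =>
    intro R P hRcard _ _ _ _
    have hR : R = ∅ := Finset.card_eq_zero.mp (Nat.le_zero.mp hRcard)
    subst hR
    have : restr (∅ : Finset (Fin d)) h = 0 := by funext i; simp [restr]
    rw [this, Matrix.mulVec_zero]
    simp only [ip, Pi.zero_apply, mul_zero, Finset.sum_const_zero, abs_zero, add_zero]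
    have h1 : 0 ≤ δ * (l2 (restr T₀ h) + l2 (restr T₁ h)) :=
      mul_nonneg hδ0 (add_nonneg (l2_nonneg _) (l2_nonneg _))
    have h2 : 0 ≤ (Real.sqrt s)⁻¹ * ∑ i ∈ P ∪ ∅, |h i| :=
      mul_nonneg (inv_nonneg.mpr (Real.sqrt_nonneg _))
        (Finset.sum_nonneg fun i _ => abs_nonneg _)
    positivity
  | succ n ih =>
    intro R P hRcard hPcard hPR hRT hdom
    have hd0R : Disjoint T₀ R :=
      (Finset.disjoint_right.mpr fun i hiR => fun hiT =>
        (Finset.disjoint_left.mp hRT hiR) (Finset.mem_union_left _ hiT))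
    have hd1R : Disjoint T₁ R :=
      (Finset.disjoint_right.mpr fun i hiR => fun hiT =>
        (Finset.disjoint_left.mp hRT hiR) (Finset.mem_union_right _ hiT))
    set A : ℝ := δ * (l2 (restr T₀ h) + l2 (restr T₁ h)) with hA
    have hAnn : 0 ≤ A := mul_nonneg hδ0 (add_nonneg (l2_nonneg _) (l2_nonneg _))
    by_cases hR : R.card ≤ s
    · -- single chunk
      have h0 := ipB hΦ T₀ R hd0R (by omega) h h
      have h1 := ipB hΦ T₁ R hd1R (by omega) h h
      have hc := chunk_l2 hs h R P hR hPcard hdom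
      have hchain : |ip (Φ.mulVec (restr T₀ h)) (Φ.mulVec (restr R h))| +
          |ip (Φ.mulVec (restr T₁ h)) (Φ.mulVec (restr R h))| ≤ A * l2 (restr R h) := by
        rw [hA]; nlinarith [l2_nonneg (restr T₀ h), l2_nonneg (restr T₁ h)]
      refine le_trans hchain ?_
      have hsub : (∑ p ∈ P, |h p|) ≤ ∑ i ∈ P ∪ R, |h i| :=
        Finset.sum_le_sum_of_subset_of_nonneg Finset.subset_union_left
          (fun i _ _ => abs_nonneg _)
      calc A * l2 (restr R h) ≤ A * ((Real.sqrt s)⁻¹ * ∑ p ∈ P, |h p|) :=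
            mul_le_mul_of_nonneg_left hc hAnn
        _ ≤ A * ((Real.sqrt s)⁻¹ * ∑ i ∈ P ∪ R, |h i|) := by
            apply mul_le_mul_of_nonneg_left _ hAnn
            exact mul_le_mul_of_nonneg_left hsub (inv_nonneg.mpr (Real.sqrt_nonneg _))
    · -- extract top-s chunk S, recurse on R' = R \ S
      push_neg at hR
      obtain ⟨S, hSR, hScard, hSdom⟩ := extract (fun i => |h i|) s R (le_of_lt hR)
      set R' : Finset (Fin d) := R \ S with hR'
      have hsplit : restr R h = restr S h + restr R' h := by
        funext i
        by_cases hiS : i ∈ S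
        · have hiR : i ∈ R := hSR hiS
          have hiR' : i ∉ R' := by simp [hR', hiS]
          simp [restr, hiS, hiR, hiR']
        · by_cases hiR : i ∈ R
          · have hiR' : i ∈ R' := Finset.mem_sdiff.mpr ⟨hiR, hiS⟩
            simp [restr, hiS, hiR, hiR']
          · have hiR' : i ∉ R' := fun hc => hiR (Finset.mem_sdiff.mp hc).1
            simp [restr, hiS, hiR, hiR']
      have hipadd : ∀ t : Fin d → ℝ,
          ip (Φ.mulVec t) (Φ.mulVec (restr R h)) =
            ip (Φ.mulVec t) (Φ.mulVec (restr S h)) +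
              ip (Φ.mulVec t) (Φ.mulVec (restr R' h)) := by
        intro t
        rw [hsplit, Matrix.mulVec_add]
        simp only [ip, Pi.add_apply, mul_add]
        rw [Finset.sum_add_distrib]
      have habs : ∀ t : Fin d → ℝ,
          |ip (Φ.mulVec t) (Φ.mulVec (restr R h))| ≤
            |ip (Φ.mulVec t) (Φ.mulVec (restr S h))| +
              |ip (Φ.mulVec t) (Φ.mulVec (restr R' h))| := fun t => by
        rw [hipadd t]; exact abs_add_le _ _
      have h0S := ipB hΦ T₀ S (Finset.disjoint_of_subset_right hSR hd0R) (by omega) h h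
      have h1S := ipB hΦ T₁ S (Finset.disjoint_of_subset_right hSR hd1R) (by omega) h h
      have hcS := chunk_l2 hs h S P (le_of_eq hScard) hPcard
        (fun i hi p hp => hdom i (hSR hi) p hp)
      have hSB : |ip (Φ.mulVec (restr T₀ h)) (Φ.mulVec (restr S h))| +
          |ip (Φ.mulVec (restr T₁ h)) (Φ.mulVec (restr S h))| ≤
          A * ((Real.sqrt s)⁻¹ * ∑ p ∈ P, |h p|) := by
        have hl2S : 0 ≤ l2 (restr S h) := l2_nonneg _
        have hrs : 0 ≤ (Real.sqrt s)⁻¹ * ∑ p ∈ P, |h p| :=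
          mul_nonneg (inv_nonneg.mpr (Real.sqrt_nonneg _))
            (Finset.sum_nonneg fun i _ => abs_nonneg _)
        rw [hA]
        nlinarith [l2_nonneg (restr T₀ h), l2_nonneg (restr T₁ h)]
      have hR'card : R'.card ≤ n := by
        have : R'.card = R.card - S.card := by rw [hR', Finset.card_sdiff_of_subset hSR]
        omega
      have hIH := ih R' S hR'card hScard Finset.disjoint_sdiff
        (Finset.disjoint_of_subset_left (Finset.sdiff_subset) hRT)
        (fun i hi p hp =>
          hSdom i (Finset.mem_sdiff.mp hi).1 (Finset.mem_sdiff.mp hi).2 p hp)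
      have hSR'union : S ∪ R' = R := Finset.union_sdiff_of_subset hSR
      rw [hSR'union] at hIH
      have hPRsum : (∑ i ∈ P ∪ R, |h i|) = (∑ p ∈ P, |h p|) + ∑ i ∈ R, |h i| :=
        Finset.sum_union hPR
      rw [hPRsum]
      have hexp : A * ((Real.sqrt s)⁻¹ * ((∑ p ∈ P, |h p|) + ∑ i ∈ R, |h i|)) =
          A * ((Real.sqrt s)⁻¹ * ∑ p ∈ P, |h p|) +
            A * ((Real.sqrt s)⁻¹ * ∑ i ∈ R, |h i|) := by ring
      rw [hexp]
      have ht0 := habs (restr T₀ h)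
      have ht1 := habs (restr T₁ h)
      linarith

end S15

set_option maxHeartbeats 1000000

/-- Suppose `δ_{2s} = δ < √2 − 1`, `‖Φx − u‖₂ ≤ ε`, `‖Φx̂ − u‖₂ ≤ ε`,
`h = x̂ − x`, `T₀` a set of `s` largest-magnitude coordinates of `x`, and `T₁` a set of
`s` largest-magnitude coordinates of `h|_{T₀^c}`. Then
`‖h|_{T₀∪T₁}‖₂ ≤ α ε + (ρ/√s) ‖h|_{T₀^c}‖₁`, where `ρ = √2 δ/(1−δ)` and
`α = 2√(1+δ)/(1−δ)`. -/
theorem stmt15 (m d s : ℕ) (Φ : Matrix (Fin m) (Fin d) ℝ)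
    (δ : ℝ) (hδ0 : 0 ≤ δ) (hδ : δ < Real.sqrt 2 - 1) (hΦ : RICq Φ (2 * s) δ)
    (x xhat : Fin d → ℝ) (u : Fin m → ℝ) (ε : ℝ)
    (hx : l2 (Φ.mulVec x - u) ≤ ε) (hxhat : l2 (Φ.mulVec xhat - u) ≤ ε)
    (T₀ T₁ : Finset (Fin d)) (hT₀card : T₀.card = s)
    (hT₀ : ∀ i ∈ T₀, ∀ j ∉ T₀, |x j| ≤ |x i|)
    (hT₁card : T₁.card = s) (hdisj : Disjoint T₀ T₁)
    (hT₁ : ∀ i ∈ T₁, ∀ j, j ∉ T₀ → j ∉ T₁ → |xhat j - x j| ≤ |xhat i - x i|)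
    (ρ α : ℝ) (hρ : ρ = Real.sqrt 2 * δ / (1 - δ))
    (hα : α = 2 * Real.sqrt (1 + δ) / (1 - δ)) :
    l2 (restr (T₀ ∪ T₁) (xhat - x)) ≤
      α * ε + ρ / Real.sqrt s * l1 (fun i => if i ∈ T₀ then 0 else xhat i - x i) := by
  classical
  have hε : 0 ≤ ε := le_trans (S15.l2_nonneg _) hx
  have hs2 : Real.sqrt 2 < 2 := by
    nlinarith [Real.sq_sqrt (show (0:ℝ) ≤ 2 by norm_num), Real.sqrt_nonneg 2]
  have hδ1 : δ < 1 := by linarith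
  have h1δ : (0:ℝ) < 1 - δ := by linarith
  have hαnn : 0 ≤ α := by rw [hα]; positivity
  have hρnn : 0 ≤ ρ := by rw [hρ]; positivity
  have hl1nn : 0 ≤ l1 (fun i => if i ∈ T₀ then 0 else xhat i - x i) :=
    Finset.sum_nonneg fun i _ => abs_nonneg _
  by_cases hs0 : s = 0
  · subst hs0
    have hT0e : T₀ = ∅ := Finset.card_eq_zero.mp hT₀card
    have hT1e : T₁ = ∅ := Finset.card_eq_zero.mp hT₁card
    subst hT0e; subst hT1e
    have hre : restr (∅ ∪ ∅ : Finset (Fin d)) (xhat - x) = 0 := by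
      funext i; simp [restr]
    rw [hre, S15.l2_zero, Nat.cast_zero, Real.sqrt_zero, div_zero, zero_mul, add_zero]
    exact mul_nonneg hαnn hε
  have hs : 0 < s := Nat.pos_of_ne_zero hs0
  set h : Fin d → ℝ := xhat - x with hh
  set L : ℝ := ∑ i ∈ T₀ᶜ, |h i| with hL
  have hLnn : 0 ≤ L := Finset.sum_nonneg fun i _ => abs_nonneg _
  have hl1L : l1 (fun i => if i ∈ T₀ then 0 else xhat i - x i) = L := by
    rw [l1, hL, ← Finset.sum_add_sum_compl T₀]
    have h1 : ∑ i ∈ T₀, |if i ∈ T₀ then (0:ℝ) else xhat i - x i| = 0 :=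
      Finset.sum_eq_zero fun i hi => by simp [hi]
    have h2 : ∑ i ∈ T₀ᶜ, |if i ∈ T₀ then (0:ℝ) else xhat i - x i| = ∑ i ∈ T₀ᶜ, |h i| :=
      Finset.sum_congr rfl fun i hi => by
        simp [Finset.mem_compl.mp hi, hh]
    rw [h1, h2, zero_add]
  set z : Fin d → ℝ := restr (T₀ ∪ T₁) h with hz
  have hzcard : (T₀ ∪ T₁).card = 2 * s := by
    rw [Finset.card_union_of_disjoint hdisj, hT₀card, hT₁card]; ring
  have hzsp : Sparse (2 * s) z :=
    S15.sparse_of_subset (S := T₀ ∪ T₁)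
      (fun i hi => by
        by_contra hc
        simp [hz, restr, hc] at hi)
      (le_of_eq hzcard)
  obtain ⟨hzl, hzu⟩ := hΦ z hzsp
  have hΦh : l2 (Φ.mulVec h) ≤ 2 * ε := by
    have he : Φ.mulVec h = (Φ.mulVec xhat - u) - (Φ.mulVec x - u) := by
      rw [hh, Matrix.mulVec_sub]; abel
    rw [he]
    calc l2 ((Φ.mulVec xhat - u) - (Φ.mulVec x - u))
        ≤ l2 (Φ.mulVec xhat - u) + l2 (Φ.mulVec x - u) := S15.l2_sub_le _ _
      _ ≤ 2 * ε := by linarith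
  set w : Fin d → ℝ := restr (T₀ ∪ T₁)ᶜ h with hw
  have hdecomp : Φ.mulVec h = Φ.mulVec z + Φ.mulVec w := by
    have hzw : h = z + w := by
      funext i
      show h i = restr (T₀ ∪ T₁) h i + restr (T₀ ∪ T₁)ᶜ h i
      simp only [restr]
      by_cases hi : i ∈ T₀ ∪ T₁
      · have hic : i ∉ (T₀ ∪ T₁)ᶜ := fun hc => (Finset.mem_compl.mp hc) hi
        rw [if_pos hi, if_neg hic, add_zero]
      · have hic : i ∈ (T₀ ∪ T₁)ᶜ := Finset.mem_compl.mpr hi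
        rw [if_neg hi, if_pos hic, zero_add]
    rw [← Matrix.mulVec_add, ← hzw]
  have hzsplit : z = restr T₀ h + restr T₁ h := by
    funext i
    by_cases h0 : i ∈ T₀
    · have h1 : i ∉ T₁ := Finset.disjoint_left.mp hdisj h0
      simp [hz, restr, h0, h1]
    · by_cases h1 : i ∈ T₁ <;> simp [hz, restr, h0, h1]
  have hipz : S15.ip (Φ.mulVec z) (Φ.mulVec z) =
      S15.ip (Φ.mulVec z) (Φ.mulVec h) - S15.ip (Φ.mulVec z) (Φ.mulVec w) := by
    rw [hdecomp]
    simp only [S15.ip, Pi.add_apply, mul_add]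
    rw [Finset.sum_add_distrib]
    ring
  have hl2Φz : l2 (Φ.mulVec z) ≤ Real.sqrt (1 + δ) * l2 z := by
    have h1 : l2 (Φ.mulVec z) ≤ Real.sqrt ((1 + δ) * l2 z ^ 2) :=
      Real.le_sqrt_of_sq_le hzu
    rwa [Real.sqrt_mul (by linarith), Real.sqrt_sq (S15.l2_nonneg _)] at h1
  have hip1 : S15.ip (Φ.mulVec z) (Φ.mulVec h) ≤ Real.sqrt (1 + δ) * l2 z * (2 * ε) := by
    calc S15.ip (Φ.mulVec z) (Φ.mulVec h) ≤ |S15.ip (Φ.mulVec z) (Φ.mulVec h)| := le_abs_self _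
      _ ≤ l2 (Φ.mulVec z) * l2 (Φ.mulVec h) := S15.abs_ip_le _ _
      _ ≤ (Real.sqrt (1 + δ) * l2 z) * (2 * ε) :=
          mul_le_mul hl2Φz hΦh (S15.l2_nonneg _)
            (mul_nonneg (Real.sqrt_nonneg _) (S15.l2_nonneg _))
  have hdisj1 : Disjoint T₁ ((T₀ ∪ T₁)ᶜ : Finset (Fin d)) :=
    disjoint_compl_right.mono_left Finset.subset_union_right
  have hdisj2 : Disjoint ((T₀ ∪ T₁)ᶜ : Finset (Fin d)) (T₀ ∪ T₁) :=
    disjoint_compl_left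
  have hdom : ∀ i ∈ ((T₀ ∪ T₁)ᶜ : Finset (Fin d)), ∀ p ∈ T₁, |h i| ≤ |h p| := by
    intro i hi p hp
    have hi' := Finset.mem_compl.mp hi
    rw [Finset.mem_union, not_or] at hi'
    exact hT₁ p hp i hi'.1 hi'.2
  have hclaim := S15.claimQ hδ0 hΦ h T₀ T₁ hT₀card hT₁card hs
    ((T₀ ∪ T₁)ᶜ : Finset (Fin d)).card ((T₀ ∪ T₁)ᶜ : Finset (Fin d)) T₁
    le_rfl hT₁card hdisj1 hdisj2 hdom
  have hunion : T₁ ∪ (T₀ ∪ T₁)ᶜ = T₀ᶜ := by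
    ext i
    simp only [Finset.mem_union, Finset.mem_compl, not_or]
    constructor
    · rintro (h1 | ⟨h1, h2⟩)
      · exact Finset.disjoint_right.mp hdisj h1
      · exact h1
    · intro h0
      by_cases h1 : i ∈ T₁
      · exact Or.inl h1
      · exact Or.inr ⟨h0, h1⟩
  rw [hunion] at hclaim
  have hipw : S15.ip (Φ.mulVec z) (Φ.mulVec w) =
      S15.ip (Φ.mulVec (restr T₀ h)) (Φ.mulVec w) +
        S15.ip (Φ.mulVec (restr T₁ h)) (Φ.mulVec w) := by
    rw [hzsplit, Matrix.mulVec_add]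
    simp only [S15.ip, Pi.add_apply, add_mul]
    rw [Finset.sum_add_distrib]
  have habsw : |S15.ip (Φ.mulVec z) (Φ.mulVec w)| ≤
      δ * (l2 (restr T₀ h) + l2 (restr T₁ h)) * ((Real.sqrt s)⁻¹ * L) := by
    rw [hipw]
    exact le_trans (abs_add_le _ _) hclaim
  have hsumsq : l2 (restr T₀ h) ^ 2 + l2 (restr T₁ h) ^ 2 = l2 z ^ 2 := by
    rw [S15.l2_sq, S15.l2_sq, S15.l2_sq, ← Finset.sum_add_distrib]
    refine Finset.sum_congr rfl fun i _ => ?_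
    by_cases h0 : i ∈ T₀
    · have h1 : i ∉ T₁ := Finset.disjoint_left.mp hdisj h0
      simp [hz, restr, h0, h1]
    · by_cases h1 : i ∈ T₁ <;> simp [hz, restr, h0, h1]
  have hsqrt2 : l2 (restr T₀ h) + l2 (restr T₁ h) ≤ Real.sqrt 2 * l2 z := by
    have h1 : (l2 (restr T₀ h) + l2 (restr T₁ h)) ^ 2 ≤ 2 * l2 z ^ 2 := by
      nlinarith [sq_nonneg (l2 (restr T₀ h) - l2 (restr T₁ h))]
    have h2 : l2 (restr T₀ h) + l2 (restr T₁ h) ≤ Real.sqrt (2 * l2 z ^ 2) :=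
      Real.le_sqrt_of_sq_le h1
    rwa [Real.sqrt_mul (by norm_num), Real.sqrt_sq (S15.l2_nonneg _)] at h2
  have h3 : δ * (l2 (restr T₀ h) + l2 (restr T₁ h)) * ((Real.sqrt s)⁻¹ * L) ≤
      δ * (Real.sqrt 2 * l2 z) * ((Real.sqrt s)⁻¹ * L) := by
    apply mul_le_mul_of_nonneg_right _
      (mul_nonneg (inv_nonneg.mpr (Real.sqrt_nonneg _)) hLnn)
    exact mul_le_mul_of_nonneg_left hsqrt2 hδ0
  set C : ℝ := 2 * Real.sqrt (1 + δ) * ε + Real.sqrt 2 * δ * ((Real.sqrt s)⁻¹ * L) with hC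
  have hkey : (1 - δ) * l2 z ^ 2 ≤ l2 z * C := by
    have e1 : l2 (Φ.mulVec z) ^ 2 = S15.ip (Φ.mulVec z) (Φ.mulVec z) := (S15.ip_self _).symm
    have e2 : -S15.ip (Φ.mulVec z) (Φ.mulVec w) ≤ |S15.ip (Φ.mulVec z) (Φ.mulVec w)| :=
      neg_le_abs _
    calc (1 - δ) * l2 z ^ 2 ≤ l2 (Φ.mulVec z) ^ 2 := hzl
      _ = S15.ip (Φ.mulVec z) (Φ.mulVec z) := e1
      _ = S15.ip (Φ.mulVec z) (Φ.mulVec h) - S15.ip (Φ.mulVec z) (Φ.mulVec w) := hipz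
      _ ≤ Real.sqrt (1 + δ) * l2 z * (2 * ε) +
          |S15.ip (Φ.mulVec z) (Φ.mulVec w)| := by linarith [hip1, e2]
      _ ≤ Real.sqrt (1 + δ) * l2 z * (2 * ε) +
          δ * (Real.sqrt 2 * l2 z) * ((Real.sqrt s)⁻¹ * L) := by linarith [habsw, h3]
      _ = l2 z * C := by rw [hC]; ring
  rw [hl1L]
  show l2 z ≤ α * ε + ρ / Real.sqrt s * L
  by_cases hz0 : l2 z = 0
  · rw [hz0]
    have hr : 0 ≤ ρ / Real.sqrt (s:ℝ) * L :=
      mul_nonneg (div_nonneg hρnn (Real.sqrt_nonneg _)) hLnn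
    exact add_nonneg (mul_nonneg hαnn hε) hr
  · have hzpos : 0 < l2 z := lt_of_le_of_ne (S15.l2_nonneg _) (Ne.symm hz0)
    have h4 : (1 - δ) * l2 z ≤ C := by nlinarith [hkey]
    have hspos : (0:ℝ) < Real.sqrt (s:ℝ) :=
      Real.sqrt_pos.mpr (by exact_mod_cast hs)
    have e4 : (1 - δ) * (α * ε + ρ / Real.sqrt (s:ℝ) * L) = C := by
      rw [hα, hρ, hC]
      field_simp
    have h6 : (1 - δ) * l2 z ≤ (1 - δ) * (α * ε + ρ / Real.sqrt (s:ℝ) * L) := by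
      rw [e4]; exact h4
    exact le_of_mul_le_mul_left h6 h1δ
end

section
/- (Single reweighted ℓ1-minimization.) Let Φ be an m×d real matrix with restricted isometry constant δ_{2s} = δ < √2 − 1, and set ρ = √2 δ/(1−δ) and α = 2√(1+δ)/(1−δ). Let x ∈ ℝ^d be an arbitrary vector with noisy measurements u = Φx + e where ‖e‖₂ ≤ ε. Let w ∈ ℝ^d satisfy ‖w − x‖_∞ ≤ A for some constant A. Let x_s denote a best s-sparse approximation of x, where s ≤ |supp(x)|; let μ be the smallest nonzero coordinate of x_s in absolute value, and set b = ‖x − x_s‖_∞. Let a > 0 and let x̂ be a minimizer of the weighted ℓ1 norm Σᵢ |zᵢ|/(|wᵢ| + a) over all z ∈ ℝ^d with ‖Φz − u‖₂ ≤ ε. Set C₁ = (A + a + b)/(μ − A + a) and C₂ = 2(A + a + b)/√s. Then if μ ≥ A and ρC₁ < 1, ‖x − x̂‖₂ ≤ D₁ ε + D₂ ‖x − x_s‖₁ / a, where D₁ = (1 + C₁)α/(1 − ρC₁) and D₂ = C₂ + (1 + C₁)ρC₂/(1 − ρC₁). -/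
namespace Stmt16

variable {ι : Type*} [Fintype ι]

noncomputable def ip (u v : ι → ℝ) : ℝ := ∑ i, u i * v i

lemma l2_nonneg (v : ι → ℝ) : 0 ≤ l2 v := Real.sqrt_nonneg _

lemma l2_sq (v : ι → ℝ) : l2 v ^ 2 = ∑ i, v i ^ 2 :=
  Real.sq_sqrt (Finset.sum_nonneg fun i _ => sq_nonneg _)

lemma ip_self (v : ι → ℝ) : ip v v = l2 v ^ 2 := by
  rw [l2_sq]; simp [ip, sq]

lemma ip_le (u v : ι → ℝ) : ip u v ≤ l2 u * l2 v :=
  Real.sum_mul_le_sqrt_mul_sqrt _ _ _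

lemma abs_ip_le (u v : ι → ℝ) : |ip u v| ≤ l2 u * l2 v := by
  rcases abs_cases (ip u v) with ⟨h, _⟩ | ⟨h, _⟩
  · rw [h]; exact ip_le u v
  · rw [h]
    have := ip_le (fun i => -u i) v
    have huv : ip (fun i => -u i) v = -ip u v := by simp [ip, neg_mul]
    have hl2 : l2 (fun i => -u i) = l2 u := by simp [l2]
    rw [huv, hl2] at this; linarith

lemma ip_add_left (u v w : ι → ℝ) : ip (u + v) w = ip u w + ip v w := by
  simp [ip, add_mul, Finset.sum_add_distrib]

lemma ip_add_right (u v w : ι → ℝ) : ip u (v + w) = ip u v + ip u w := by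
  simp [ip, mul_add, Finset.sum_add_distrib]

lemma ip_comm (u v : ι → ℝ) : ip u v = ip v u := by
  simp [ip, mul_comm]

lemma l2_add_le (u v : ι → ℝ) : l2 (u + v) ≤ l2 u + l2 v := by
  have h1 : l2 (u + v) ^ 2 ≤ (l2 u + l2 v) ^ 2 := by
    have heq : l2 (u + v) ^ 2 = l2 u ^ 2 + 2 * ip u v + l2 v ^ 2 := by
      rw [l2_sq, l2_sq, l2_sq]
      simp only [ip, Pi.add_apply]
      rw [Finset.mul_sum, ← Finset.sum_add_distrib, ← Finset.sum_add_distrib]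
      apply Finset.sum_congr rfl; intro i _; ring
    have h2 : ip u v ≤ l2 u * l2 v := ip_le u v
    nlinarith [l2_nonneg u, l2_nonneg v]
  have h0 : 0 ≤ l2 u + l2 v := add_nonneg (l2_nonneg u) (l2_nonneg v)
  nlinarith [l2_nonneg (u + v)]

lemma l2_sum_le {κ : Type*} (F : Finset κ) (f : κ → ι → ℝ) :
    l2 (∑ j ∈ F, f j) ≤ ∑ j ∈ F, l2 (f j) := by
  classical
  induction F using Finset.induction_on with
  | empty => simp [l2]
  | insert j F' hj ih =>
    rw [Finset.sum_insert hj, Finset.sum_insert hj]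
    exact (l2_add_le _ _).trans (by linarith)

-- sums of restriction
lemma l2_restr_sq {d : ℕ} (F : Finset (Fin d)) (v : Fin d → ℝ) :
    l2 (restr F v) ^ 2 = ∑ i ∈ F, v i ^ 2 := by
  rw [l2_sq]
  rw [← Finset.sum_filter_add_sum_filter_not Finset.univ (· ∈ F)]
  have h1 : ∀ i ∈ Finset.univ.filter (· ∈ F), restr F v i ^ 2 = v i ^ 2 := by
    intro i hi; simp only [Finset.mem_filter] at hi; simp [restr, hi.2]
  have h2 : ∀ i ∈ Finset.univ.filter (¬ · ∈ F), restr F v i ^ 2 = 0 := by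
    intro i hi; simp only [Finset.mem_filter] at hi; simp [restr, hi.2]
  rw [Finset.sum_congr rfl h1, Finset.sum_congr rfl h2, Finset.sum_const_zero, add_zero,
    Finset.filter_mem_eq_inter, Finset.univ_inter]

lemma l1_restr {d : ℕ} (F : Finset (Fin d)) (v : Fin d → ℝ) :
    l1 (restr F v) = ∑ i ∈ F, |v i| := by
  rw [l1]
  rw [← Finset.sum_filter_add_sum_filter_not Finset.univ (· ∈ F)]
  have h1 : ∀ i ∈ Finset.univ.filter (· ∈ F), |restr F v i| = |v i| := by
    intro i hi; simp only [Finset.mem_filter] at hi; simp [restr, hi.2]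
  have h2 : ∀ i ∈ Finset.univ.filter (¬ · ∈ F), |restr F v i| = 0 := by
    intro i hi; simp only [Finset.mem_filter] at hi; simp [restr, hi.2]
  rw [Finset.sum_congr rfl h1, Finset.sum_congr rfl h2, Finset.sum_const_zero, add_zero,
    Finset.filter_mem_eq_inter, Finset.univ_inter]

lemma restr_union {d : ℕ} (F G : Finset (Fin d)) (hFG : Disjoint F G) (v : Fin d → ℝ) :
    restr (F ∪ G) v = restr F v + restr G v := by
  funext i
  simp only [restr, Pi.add_apply, Finset.mem_union]
  by_cases hF : i ∈ F
  · have hG : i ∉ G := Finset.disjoint_left.1 hFG hF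
    simp [hF, hG]
  · by_cases hG : i ∈ G <;> simp [hF, hG]

lemma sparse_of_subset {d r : ℕ} (v : Fin d → ℝ) (F : Finset (Fin d))
    (h : ∀ i, v i ≠ 0 → i ∈ F) (hF : F.card ≤ r) : Sparse r v := by
  have : {i | v i ≠ 0} ⊆ ↑F := fun i hi => h i hi
  calc {i | v i ≠ 0}.ncard ≤ (↑F : Set (Fin d)).ncard :=
        Set.ncard_le_ncard this (Set.toFinite _)
    _ = F.card := by rw [Set.ncard_coe_finset]
    _ ≤ r := hF

lemma sparse_restr {d r : ℕ} (F : Finset (Fin d)) (v : Fin d → ℝ) (hF : F.card ≤ r) :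
    Sparse r (restr F v) := by
  apply sparse_of_subset _ F _ hF
  intro i hi
  by_contra hiF
  exact hi (by simp [restr, hiF])

lemma l2_eq_zero {v : ι → ℝ} (h : l2 v = 0) : v = 0 := by
  funext i
  have h0 : ∑ j, v j ^ 2 = 0 := by
    have := Real.sqrt_eq_zero (Finset.sum_nonneg fun j _ => sq_nonneg _) |>.1 h
    exact this
  have := (Finset.sum_eq_zero_iff_of_nonneg (fun j _ => sq_nonneg (v j))).1 h0 i (Finset.mem_univ i)
  exact pow_eq_zero_iff (by norm_num) |>.1 this

lemma l2_smul (c : ℝ) (v : ι → ℝ) : l2 (c • v) = |c| * l2 v := by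
  simp only [l2, Pi.smul_apply, smul_eq_mul, mul_pow, ← Finset.mul_sum]
  rw [Real.sqrt_mul (sq_nonneg c), Real.sqrt_sq_eq_abs]

lemma ip_smul_left (c : ℝ) (u v : ι → ℝ) : ip (c • u) v = c * ip u v := by
  simp [ip, Finset.mul_sum, mul_assoc]

lemma sparse_pm {d s : ℕ} (u v : Fin d → ℝ) (hu : Sparse s u) (hv : Sparse s v)
    (c : ℝ) : Sparse (2 * s) (u + c • v) := by
  have hsub : {i | (u + c • v) i ≠ 0} ⊆ {i | u i ≠ 0} ∪ {i | v i ≠ 0} := by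
    intro i hi
    by_contra hc
    simp only [Set.mem_union, Set.mem_setOf_eq, not_or, not_not] at hc
    simp [Set.mem_setOf_eq, hc.1, hc.2] at hi
  calc {i | (u + c • v) i ≠ 0}.ncard ≤ ({i | u i ≠ 0} ∪ {i | v i ≠ 0}).ncard :=
        Set.ncard_le_ncard hsub (Set.toFinite _)
    _ ≤ {i | u i ≠ 0}.ncard + {i | v i ≠ 0}.ncard := Set.ncard_union_le _ _
    _ ≤ s + s := add_le_add hu hv
    _ = 2 * s := by ring

lemma rip_upper_sqrt {m d s : ℕ} {Φ : Matrix (Fin m) (Fin d) ℝ} {δ : ℝ} (hδ1 : 0 ≤ 1 + δ)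
    (hΦ : RICq Φ (2 * s) δ) (v : Fin d → ℝ) (hv : Sparse (2 * s) v) :
    l2 (Φ.mulVec v) ≤ Real.sqrt (1 + δ) * l2 v := by
  have h := (hΦ v hv).2
  have hr : l2 (Φ.mulVec v) = Real.sqrt (l2 (Φ.mulVec v) ^ 2) :=
    (Real.sqrt_sq (l2_nonneg _)).symm
  rw [hr]
  have : Real.sqrt (l2 (Φ.mulVec v) ^ 2) ≤ Real.sqrt ((1 + δ) * l2 v ^ 2) :=
    Real.sqrt_le_sqrt h
  refine this.trans_eq ?_
  rw [Real.sqrt_mul hδ1, Real.sqrt_sq (l2_nonneg _)]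

lemma ro {m d s : ℕ} {Φ : Matrix (Fin m) (Fin d) ℝ} {δ : ℝ} (hδ0 : 0 ≤ δ)
    (hΦ : RICq Φ (2 * s) δ) (u v : Fin d → ℝ) (hu : Sparse s u) (hv : Sparse s v)
    (hdisj : ∀ i, u i = 0 ∨ v i = 0) :
    |ip (Φ.mulVec u) (Φ.mulVec v)| ≤ δ * l2 u * l2 v := by
  have key : ∀ p q : Fin d → ℝ, Sparse s p → Sparse s q → (∀ i, p i = 0 ∨ q i = 0) →
      l2 p = 1 → l2 q = 1 → |ip (Φ.mulVec p) (Φ.mulVec q)| ≤ δ := by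
    intro p q hp hq hd hp1 hq1
    have hpq0 : ip p q = 0 := by
      apply Finset.sum_eq_zero; intro i _
      rcases hd i with h | h <;> simp [h]
    have hplus : l2 (p + (1 : ℝ) • q) ^ 2 = 2 := by
      rw [← ip_self]
      have : ip (p + (1:ℝ) • q) (p + (1:ℝ) • q) = ip p p + 2 * ip p q + ip q q := by
        simp only [ip, Pi.add_apply, Pi.smul_apply, smul_eq_mul, one_mul, Finset.mul_sum,
          ← Finset.sum_add_distrib]
        apply Finset.sum_congr rfl; intro i _; ring
      rw [this, hpq0, ip_self, ip_self, hp1, hq1]; norm_num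
    have hminus : l2 (p + (-1 : ℝ) • q) ^ 2 = 2 := by
      rw [← ip_self]
      have : ip (p + (-1:ℝ) • q) (p + (-1:ℝ) • q) = ip p p - 2 * ip p q + ip q q := by
        simp only [ip, Pi.add_apply, Pi.smul_apply, smul_eq_mul, neg_one_mul, Finset.mul_sum,
          ← Finset.sum_add_distrib, ← Finset.sum_sub_distrib]
        apply Finset.sum_congr rfl; intro i _; ring
      rw [this, hpq0, ip_self, ip_self, hp1, hq1]; norm_num
    have hsp : Sparse (2 * s) (p + (1:ℝ) • q) := sparse_pm p q hp hq 1
    have hsm : Sparse (2 * s) (p + (-1:ℝ) • q) := sparse_pm p q hp hq (-1)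
    have hΦp := hΦ _ hsp
    have hΦm := hΦ _ hsm
    rw [hplus] at hΦp
    rw [hminus] at hΦm
    have hexp : ∀ c : ℝ, l2 (Φ.mulVec (p + c • q)) ^ 2 =
        l2 (Φ.mulVec p) ^ 2 + 2 * c * ip (Φ.mulVec p) (Φ.mulVec q)
          + c ^ 2 * l2 (Φ.mulVec q) ^ 2 := by
      intro c
      have hmv : Φ.mulVec (p + c • q) = Φ.mulVec p + c • Φ.mulVec q := by
        rw [Matrix.mulVec_add, Matrix.mulVec_smul]
      rw [hmv, ← ip_self, ← ip_self, ← ip_self]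
      simp only [ip, Pi.add_apply, Pi.smul_apply, smul_eq_mul, Finset.mul_sum,
        ← Finset.sum_add_distrib]
      apply Finset.sum_congr rfl; intro i _; ring
    rw [hexp 1] at hΦp
    rw [hexp (-1)] at hΦm
    rw [abs_le]
    constructor <;> nlinarith [hΦp.1, hΦp.2, hΦm.1, hΦm.2]
  by_cases hu0 : l2 u = 0
  · rw [l2_eq_zero hu0]
    simp only [ip, Matrix.mulVec_zero, Pi.zero_apply, zero_mul, Finset.sum_const_zero, abs_zero]
    exact mul_nonneg (mul_nonneg hδ0 (l2_nonneg _)) (l2_nonneg _)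
  by_cases hv0 : l2 v = 0
  · rw [l2_eq_zero hv0]
    simp only [ip, Matrix.mulVec_zero, Pi.zero_apply, mul_zero, Finset.sum_const_zero, abs_zero]
    exact mul_nonneg (mul_nonneg hδ0 (l2_nonneg _)) (l2_nonneg _)
  have hupos : 0 < l2 u := (l2_nonneg u).lt_of_ne (Ne.symm hu0)
  have hvpos : 0 < l2 v := (l2_nonneg v).lt_of_ne (Ne.symm hv0)
  set p := (l2 u)⁻¹ • u with hpdef
  set q := (l2 v)⁻¹ • v with hqdef
  have hp : Sparse s p := by
    apply le_trans (Set.ncard_le_ncard _ (Set.toFinite _)) hu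
    intro i hi
    simp only [hpdef, Pi.smul_apply, smul_eq_mul, Set.mem_setOf_eq] at hi ⊢
    exact fun h => hi (by rw [h, mul_zero])
  have hq : Sparse s q := by
    apply le_trans (Set.ncard_le_ncard _ (Set.toFinite _)) hv
    intro i hi
    simp only [hqdef, Pi.smul_apply, smul_eq_mul, Set.mem_setOf_eq] at hi ⊢
    exact fun h => hi (by rw [h, mul_zero])
  have hd : ∀ i, p i = 0 ∨ q i = 0 := by
    intro i
    rcases hdisj i with h | h
    · left; simp [hpdef, h]
    · right; simp [hqdef, h]
  have hp1 : l2 p = 1 := by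
    rw [hpdef, l2_smul, abs_of_pos (inv_pos.2 hupos), inv_mul_cancel₀ (ne_of_gt hupos)]
  have hq1 : l2 q = 1 := by
    rw [hqdef, l2_smul, abs_of_pos (inv_pos.2 hvpos), inv_mul_cancel₀ (ne_of_gt hvpos)]
  have hk := key p q hp hq hd hp1 hq1
  have hip : ip (Φ.mulVec p) (Φ.mulVec q) =
      (l2 u)⁻¹ * ((l2 v)⁻¹ * ip (Φ.mulVec u) (Φ.mulVec v)) := by
    rw [hpdef, hqdef, Matrix.mulVec_smul, Matrix.mulVec_smul, ip_smul_left]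
    congr 1
    rw [ip_comm, ip_smul_left, ip_comm]
  rw [hip] at hk
  rw [abs_mul, abs_mul, abs_of_pos (inv_pos.2 hupos), abs_of_pos (inv_pos.2 hvpos)] at hk
  rw [← mul_le_mul_iff_right₀ hupos, ← mul_le_mul_iff_right₀ hvpos] at hk
  calc |ip (Φ.mulVec u) (Φ.mulVec v)|
      = l2 v * (l2 u * ((l2 u)⁻¹ * ((l2 v)⁻¹ * |ip (Φ.mulVec u) (Φ.mulVec v)|))) := by
        field_simp
    _ ≤ l2 v * (l2 u * δ) := hk
    _ = δ * l2 u * l2 v := by ring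

lemma exists_top {d : ℕ} (v : Fin d → ℝ) :
    ∀ (s : ℕ) (T : Finset (Fin d)), s ≤ T.card →
      ∃ F, F ⊆ T ∧ F.card = s ∧ ∀ i ∈ F, ∀ j ∈ T \ F, |v j| ≤ |v i| := by
  intro s
  induction s with
  | zero => intro T _; exact ⟨∅, Finset.empty_subset T, rfl, by simp⟩
  | succ s ih =>
    intro T hT
    have hne : T.Nonempty := Finset.card_pos.1 (by omega)
    obtain ⟨i₀, hi₀T, hi₀max⟩ := Finset.exists_max_image T (fun i => |v i|) hne
    have hcard : s ≤ (T.erase i₀).card := by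
      rw [Finset.card_erase_of_mem hi₀T]; omega
    obtain ⟨F', hF'sub, hF'card, hF'dom⟩ := ih (T.erase i₀) hcard
    have hi₀F' : i₀ ∉ F' := fun h => (Finset.mem_erase.1 (hF'sub h)).1 rfl
    refine ⟨insert i₀ F', ?_, ?_, ?_⟩
    · intro i hi
      rcases Finset.mem_insert.1 hi with rfl | hi
      · exact hi₀T
      · exact Finset.mem_of_mem_erase (hF'sub hi)
    · rw [Finset.card_insert_of_notMem hi₀F', hF'card]
    · intro i hi j hj
      have hjT : j ∈ T := (Finset.mem_sdiff.1 hj).1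
      have hjF : j ∉ insert i₀ F' := (Finset.mem_sdiff.1 hj).2
      rcases Finset.mem_insert.1 hi with rfl | hi
      · exact hi₀max j hjT
      · apply hF'dom i hi
        rw [Finset.mem_sdiff]
        refine ⟨Finset.mem_erase.2 ⟨?_, hjT⟩, ?_⟩
        · exact fun h => hjF (h ▸ Finset.mem_insert_self i₀ F')
        · exact fun h => hjF (Finset.mem_insert_of_mem h)

lemma block_decomp {d : ℕ} (v : Fin d → ℝ) (s : ℕ) (hs : 1 ≤ s) :
    ∀ (n : ℕ) (T : Finset (Fin d)), T.card = n →
      ∃ (J : ℕ) (B : ℕ → Finset (Fin d)),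
        1 ≤ J ∧
        (∀ j, j < J → B j ⊆ T) ∧
        (∀ j, j < J → (B j).card ≤ s) ∧
        (∀ j, j + 1 < J → (B j).card = s) ∧
        (∀ j ∈ Finset.range J, ∀ j' ∈ Finset.range J, j ≠ j' → Disjoint (B j) (B j')) ∧
        T = (Finset.range J).biUnion B ∧
        (∀ j, j + 1 < J → ∀ i ∈ B (j + 1), ∀ i' ∈ B j, |v i| ≤ |v i'|) := by
  intro n
  induction n using Nat.strong_induction_on with
  | _ n ih =>
    intro T hT
    by_cases hc : T.card ≤ s
    · refine ⟨1, fun _ => T, le_refl 1, fun _ _ => Finset.Subset.refl T, fun _ _ => hc,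
        fun j hj => by omega, ?_, by simp, fun j hj => by omega⟩
      intro j hj j' hj' hne
      simp only [Finset.mem_range] at hj hj'
      omega
    · push_neg at hc
      obtain ⟨F, hFsub, hFcard, hFdom⟩ := exists_top v s T hc.le
      have hcard2 : (T \ F).card = T.card - s := by
        rw [Finset.card_sdiff_of_subset hFsub, hFcard]
      have hlt : T.card - s < n := by omega
      obtain ⟨J', B', hJ'1, hB'sub, hB'le, hB'eq, hB'disj, hB'union, hB'dom⟩ :=
        ih (T.card - s) (by omega) (T \ F) (by omega)
      refine ⟨J' + 1, fun j => match j with | 0 => F | j + 1 => B' j, by omega, ?_, ?_, ?_, ?_, ?_, ?_⟩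
      · intro j hj
        match j with
        | 0 => exact hFsub
        | j + 1 => exact (hB'sub j (by omega)).trans (Finset.sdiff_subset)
      · intro j hj
        match j with
        | 0 => exact hFcard.le
        | j + 1 => exact hB'le j (by omega)
      · intro j hj
        match j with
        | 0 => exact hFcard
        | j + 1 => exact hB'eq j (by omega)
      · have hd0 : ∀ k, k < J' → Disjoint F (B' k) := by
          intro k hk
          rw [Finset.disjoint_left]
          intro i hiF hiB
          exact (Finset.mem_sdiff.1 (hB'sub k hk hiB)).2 hiF
        intro j hj j' hj' hne
        simp only [Finset.mem_range] at hj hj'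
        match j, j' with
        | 0, 0 => omega
        | 0, j' + 1 => exact hd0 j' (by omega)
        | j + 1, 0 => exact (hd0 j (by omega)).symm
        | j + 1, j' + 1 =>
          exact hB'disj j (Finset.mem_range.2 (by omega)) j' (Finset.mem_range.2 (by omega))
            (by omega)
      · ext i
        simp only [Finset.mem_biUnion, Finset.mem_range]
        constructor
        · intro hiT
          by_cases hiF : i ∈ F
          · exact ⟨0, by omega, hiF⟩
          · have : i ∈ T \ F := Finset.mem_sdiff.2 ⟨hiT, hiF⟩
            rw [hB'union] at this
            obtain ⟨k, hk, hik⟩ := Finset.mem_biUnion.1 this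
            simp only [Finset.mem_range] at hk
            exact ⟨k + 1, by omega, hik⟩
        · rintro ⟨j, hj, hij⟩
          match j with
          | 0 => exact hFsub hij
          | j + 1 => exact Finset.sdiff_subset (hB'sub j (by omega) hij)
      · intro j hj i hi i' hi'
        match j with
        | 0 =>
          apply hFdom i' hi'
          exact hB'sub 0 (by omega) hi
        | j + 1 => exact hB'dom j (by omega) i hi i' hi'

lemma chain {d : ℕ} (v : Fin d → ℝ) (s : ℕ) (hs : 1 ≤ s) (T : Finset (Fin d))
    (J : ℕ) (B : ℕ → Finset (Fin d))
    (hle : ∀ j, j < J → (B j).card ≤ s)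
    (heq : ∀ j, j + 1 < J → (B j).card = s)
    (hdisj : ∀ j ∈ Finset.range J, ∀ j' ∈ Finset.range J, j ≠ j' → Disjoint (B j) (B j'))
    (hunion : T = (Finset.range J).biUnion B)
    (hdom : ∀ j, j + 1 < J → ∀ i ∈ B (j + 1), ∀ i' ∈ B j, |v i| ≤ |v i'|) :
    ∑ j ∈ Finset.Ico 1 J, l2 (restr (B j) v) ≤ (Real.sqrt s)⁻¹ * ∑ i ∈ T, |v i| := by
  have hs0 : (0:ℝ) < (s:ℝ) := by exact_mod_cast hs
  have hsqs : (0:ℝ) < Real.sqrt s := Real.sqrt_pos.2 hs0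
  set Q : ℕ → ℝ := fun k => ∑ i ∈ B k, |v i| with hQ
  have hQnn : ∀ k, 0 ≤ Q k := fun k => Finset.sum_nonneg fun i _ => abs_nonneg _
  have hterm : ∀ j ∈ Finset.Ico 1 J, l2 (restr (B j) v) ≤ (Real.sqrt s)⁻¹ * Q (j - 1) := by
    intro j hj
    rw [Finset.mem_Ico] at hj
    obtain ⟨k, rfl⟩ : ∃ k, j = k + 1 := ⟨j - 1, by omega⟩
    have hkJ : k + 1 < J := hj.2
    have hbound : ∀ i ∈ B (k + 1), |v i| ≤ Q k / s := by
      intro i hi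
      have h1 : (B k).card • |v i| ≤ ∑ i' ∈ B k, |v i'| :=
        Finset.card_nsmul_le_sum (B k) _ _ (fun i' hi' => hdom k hkJ i hi i' hi')
      rw [heq k hkJ, nsmul_eq_mul] at h1
      rw [le_div_iff₀ hs0, mul_comm]
      exact h1
    have hsq : l2 (restr (B (k + 1)) v) ^ 2 ≤ Q k ^ 2 / s := by
      rw [l2_restr_sq]
      calc ∑ i ∈ B (k + 1), v i ^ 2 ≤ ∑ _i ∈ B (k + 1), (Q k / s) ^ 2 := by
            apply Finset.sum_le_sum
            intro i hi
            rw [← sq_abs (v i)]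
            exact pow_le_pow_left₀ (abs_nonneg _) (hbound i hi) 2
        _ = (B (k + 1)).card * (Q k / s) ^ 2 := by
            rw [Finset.sum_const, nsmul_eq_mul]
        _ ≤ s * (Q k / s) ^ 2 := by
            apply mul_le_mul_of_nonneg_right _ (sq_nonneg _)
            exact_mod_cast hle (k + 1) hkJ
        _ = Q k ^ 2 / s := by field_simp
    have : l2 (restr (B (k + 1)) v) ≤ Real.sqrt (Q k ^ 2 / s) := by
      rw [← Real.sqrt_sq (l2_nonneg _)]
      exact Real.sqrt_le_sqrt hsq
    refine this.trans_eq ?_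
    rw [Real.sqrt_div (sq_nonneg _), Real.sqrt_sq (hQnn k)]
    simp [div_eq_inv_mul, mul_comm]
  have hsum : ∑ j ∈ Finset.Ico 1 J, l2 (restr (B j) v)
      ≤ (Real.sqrt s)⁻¹ * ∑ j ∈ Finset.Ico 1 J, Q (j - 1) := by
    rw [Finset.mul_sum]
    exact Finset.sum_le_sum hterm
  refine hsum.trans ?_
  apply mul_le_mul_of_nonneg_left _ (le_of_lt (inv_pos.2 hsqs))
  have h1 : ∑ j ∈ Finset.Ico 1 J, Q (j - 1) = ∑ k ∈ Finset.range (J - 1), Q k := by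
    rw [Finset.sum_Ico_eq_sum_range]
    apply Finset.sum_congr rfl
    intro k _
    congr 1
    omega
  rw [h1]
  have h2 : ∑ k ∈ Finset.range (J - 1), Q k ≤ ∑ k ∈ Finset.range J, Q k := by
    apply Finset.sum_le_sum_of_subset_of_nonneg
    · exact Finset.range_subset_range.2 (by omega)
    · intro k _ _; exact hQnn k
  refine h2.trans_eq ?_
  rw [hunion, Finset.sum_biUnion]
  intro j hj j' hj' hne
  exact hdisj j hj j' hj' hne

lemma sqrt_two_lt_two : Real.sqrt 2 < 2 := by
  nlinarith [Real.sq_sqrt (by norm_num : (0:ℝ) ≤ 2), Real.sqrt_nonneg 2]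

lemma le_of_sq_le' {u v : ℝ} (hu : 0 ≤ u) (hv : 0 ≤ v) (h : u ^ 2 ≤ v ^ 2) : u ≤ v := by
  nlinarith

lemma amgm2 {p q X : ℝ} (hp : 0 ≤ p) (hq : 0 ≤ q) (hX : 0 ≤ X) (h : X ^ 2 = p ^ 2 + q ^ 2) :
    p + q ≤ Real.sqrt 2 * X := by
  have h2 : Real.sqrt 2 ^ 2 = 2 := Real.sq_sqrt (by norm_num)
  apply le_of_sq_le' (add_nonneg hp hq) (mul_nonneg (Real.sqrt_nonneg 2) hX)
  rw [mul_pow, h2]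
  nlinarith [sq_nonneg (p - q)]

lemma cancel_mul_right {c K X : ℝ} (hX : 0 < X) (h : c * X ^ 2 ≤ K * X) : c * X ≤ K := by
  have h2 : (c * X) * X ≤ K * X := by nlinarith
  exact (mul_le_mul_iff_left₀ hX).1 h2

lemma solve_div {c X K : ℝ} (hc : 0 < c) (h : c * X ≤ K) : X ≤ K / c := by
  rw [le_div_iff₀ hc]; linarith

lemma le_of_sq_le {u v : ℝ} (hu : 0 ≤ u) (hv : 0 ≤ v) (h : u ^ 2 ≤ v ^ 2) : u ≤ v := by
  nlinarith

lemma l2_neg (v : ι → ℝ) : l2 (-v) = l2 v := by simp [l2]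

lemma ip_sum_right {κ : Type*} (F : Finset κ) (u : ι → ℝ) (f : κ → ι → ℝ) :
    ip u (∑ j ∈ F, f j) = ∑ j ∈ F, ip u (f j) := by
  simp only [ip, Finset.sum_apply, Finset.mul_sum]
  exact Finset.sum_comm

lemma mulVec_sum {m d : ℕ} {κ : Type*} (Φ : Matrix (Fin m) (Fin d) ℝ) (F : Finset κ)
    (f : κ → Fin d → ℝ) :
    Φ.mulVec (∑ j ∈ F, f j) = ∑ j ∈ F, Φ.mulVec (f j) := by
  classical
  induction F using Finset.induction_on with
  | empty => simp [Matrix.mulVec_zero]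
  | insert j F' hj ih =>
    rw [Finset.sum_insert hj, Finset.sum_insert hj, Matrix.mulVec_add, ih]

lemma restr_partition {d J : ℕ} (B : ℕ → Finset (Fin d)) (T : Finset (Fin d))
    (hdisj : ∀ j ∈ Finset.range J, ∀ j' ∈ Finset.range J, j ≠ j' → Disjoint (B j) (B j'))
    (hunion : T = (Finset.range J).biUnion B) (v : Fin d → ℝ) :
    restr T v = ∑ j ∈ Finset.range J, restr (B j) v := by
  funext i
  rw [Finset.sum_apply]
  by_cases hiT : i ∈ T
  · obtain ⟨j₀, hj₀, hij₀⟩ := Finset.mem_biUnion.1 (hunion ▸ hiT)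
    rw [Finset.sum_eq_single j₀]
    · simp [restr, hij₀, hiT]
    · intro j hj hne
      have hnb : i ∉ B j := fun hij =>
        (Finset.disjoint_left.1 (hdisj j hj j₀ hj₀ hne) hij) hij₀
      simp [restr, hnb]
    · intro hj; exact absurd hj₀ hj
  · have hz : ∀ j ∈ Finset.range J, restr (B j) v i = 0 := by
      intro j hj
      have hnb : i ∉ B j := fun hib =>
        hiT (hunion ▸ Finset.mem_biUnion.2 ⟨j, hj, hib⟩)
      simp [restr, hnb]
    rw [Finset.sum_eq_zero hz]
    simp [restr, hiT]

lemma restr_compl_add {d : ℕ} (S : Finset (Fin d)) (v : Fin d → ℝ) :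
    v = restr S v + restr Sᶜ v := by
  funext i
  by_cases hi : i ∈ S <;> simp [restr, hi]

end Stmt16

set_option maxHeartbeats 2000000

open Stmt16

/-- **Single reweighted ℓ1-minimization.**
Here `restr S x` plays the role of `x_s` (a best `s`-sparse approximation of `x`),
`μ` is the smallest nonzero coordinate of `x_s` in absolute value, and `xhat` is a
minimizer of the weighted ℓ1 norm `∑ i, |z i|/(|w i| + a)` over all `z` with
`‖Φz − u‖₂ ≤ ε`, where `u = Φx + e`. -/
theorem stmt16 (m d s : ℕ)
    (Φ : Matrix (Fin m) (Fin d) ℝ)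
    (δ : ℝ) (hδ0 : 0 ≤ δ) (hδ : δ < Real.sqrt 2 - 1) (hΦ : RICq Φ (2 * s) δ)
    (x : Fin d → ℝ) (e : Fin m → ℝ) (ε : ℝ) (he : l2 e ≤ ε)
    (w : Fin d → ℝ) (A : ℝ) (hw : ∀ i, |w i - x i| ≤ A)
    (S : Finset (Fin d)) (hScard : S.card = s)
    (hSbig : ∀ i ∈ S, ∀ j ∉ S, |x j| ≤ |x i|)
    (hssupp : s ≤ {i | x i ≠ 0}.ncard)
    (μ : ℝ) (hμ : IsLeast {t : ℝ | ∃ i ∈ S, x i ≠ 0 ∧ t = |x i|} μ)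
    (b : ℝ) (hb : b = linf (x - restr S x))
    (a : ℝ) (ha : 0 < a)
    (xhat : Fin d → ℝ)
    (hfeas : l2 (Φ.mulVec xhat - (Φ.mulVec x + e)) ≤ ε)
    (hmin : ∀ z : Fin d → ℝ, l2 (Φ.mulVec z - (Φ.mulVec x + e)) ≤ ε →
      (∑ i, |xhat i| / (|w i| + a)) ≤ ∑ i, |z i| / (|w i| + a))
    (ρ α C₁ C₂ D₁ D₂ : ℝ)
    (hρ : ρ = Real.sqrt 2 * δ / (1 - δ))
    (hα : α = 2 * Real.sqrt (1 + δ) / (1 - δ))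
    (hC₁ : C₁ = (A + a + b) / (μ - A + a))
    (hC₂ : C₂ = 2 * (A + a + b) / Real.sqrt s)
    (hD₁ : D₁ = (1 + C₁) * α / (1 - ρ * C₁))
    (hD₂ : D₂ = C₂ + (1 + C₁) * ρ * C₂ / (1 - ρ * C₁))
    (hμA : A ≤ μ) (hρC : ρ * C₁ < 1) :
    l2 (x - xhat) ≤ D₁ * ε + D₂ * l1 (x - restr S x) / a := by
  classical
  -- basic positivity facts
  obtain ⟨i₁, hi₁S, hxi₁, hμeq⟩ := hμ.1
  have hs1 : 1 ≤ s := by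
    rw [← hScard]
    exact Finset.card_pos.2 ⟨i₁, hi₁S⟩
  have hA0 : 0 ≤ A := le_trans (abs_nonneg _) (hw i₁)
  have hsqrt2 : Real.sqrt 2 ^ 2 = 2 := Real.sq_sqrt (by norm_num)
  have hδ1 : δ < 1 := by have := sqrt_two_lt_two; linarith
  have h1δ : (0:ℝ) < 1 - δ := by linarith
  have hε0 : 0 ≤ ε := le_trans (l2_nonneg e) he
  have hblinf : ∀ i ∉ S, |x i| ≤ b := by
    intro i hi
    have : (x - restr S x) i = x i := by simp [restr, hi]
    rw [hb, linf, ← this]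
    exact le_ciSup (f := fun j => |(x - restr S x) j|)
      (Set.Finite.bddAbove (Set.finite_range _)) i
  have hb0 : 0 ≤ b := by
    rw [hb, linf]
    exact le_ciSup_of_le (f := fun i => |(x - restr S x) i|)
      (Set.Finite.bddAbove (Set.finite_range _)) i₁ (abs_nonneg _)
  have hμa : (0:ℝ) < μ - A + a := by linarith
  have hAab : (0:ℝ) < A + a + b := by linarith
  have hC₁0 : 0 ≤ C₁ := by
    rw [hC₁]; exact div_nonneg (by linarith) hμa.le
  have hsq : (0:ℝ) < Real.sqrt s := Real.sqrt_pos.2 (by exact_mod_cast hs1)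
  have hC₂0 : 0 ≤ C₂ := by
    rw [hC₂]; exact div_nonneg (by linarith) hsq.le
  have hρ0 : 0 ≤ ρ := by
    rw [hρ]; exact div_nonneg (mul_nonneg (Real.sqrt_nonneg 2) hδ0) h1δ.le
  have hα0 : 0 ≤ α := by
    rw [hα]; exact div_nonneg (by positivity) h1δ.le
  have h1ρC : (0:ℝ) < 1 - ρ * C₁ := by linarith
  -- every coordinate of x on S is nonzero and at least μ in absolute value
  have hxS : ∀ i ∈ S, x i ≠ 0 := by
    intro i₀ hi₀ hx0
    have hout : ∀ j, x j ≠ 0 → j ∈ S.erase i₀ := by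
      intro j hj
      by_cases hjS : j ∈ S
      · exact Finset.mem_erase.2 ⟨fun h => hj (h ▸ hx0), hjS⟩
      · exfalso
        have h1 := hSbig i₀ hi₀ j hjS
        rw [hx0, abs_zero] at h1
        exact hj (abs_eq_zero.1 (le_antisymm h1 (abs_nonneg _)))
    have hle : {i | x i ≠ 0}.ncard ≤ (S.erase i₀).card := by
      rw [← Set.ncard_coe_finset]
      exact Set.ncard_le_ncard (fun j hj => hout j hj) (Set.toFinite _)
    rw [Finset.card_erase_of_mem hi₀, hScard] at hle
    omega
  have hxSμ : ∀ i ∈ S, μ ≤ |x i| := fun i hi => hμ.2 ⟨i, hi, hxS i hi, rfl⟩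
  -- the error vector
  set h : Fin d → ℝ := x - xhat with hh
  -- weights
  set W : Fin d → ℝ := fun i => |w i| + a with hW
  have hWpos : ∀ i, 0 < W i := fun i => by
    have := abs_nonneg (w i); simp only [hW]; linarith
  have hWa : ∀ i, a ≤ W i := fun i => by
    have := abs_nonneg (w i); simp only [hW]; linarith
  have hWS : ∀ i ∈ S, μ - A + a ≤ W i := by
    intro i hi
    have h1 : |x i| - |w i| ≤ |x i - w i| := abs_sub_abs_le_abs_sub _ _
    have h2 : |x i - w i| = |w i - x i| := abs_sub_comm _ _
    have h3 := hw i
    have h4 := hxSμ i hi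
    simp only [hW]
    linarith [h2 ▸ h1]
  have hWSc : ∀ i ∉ S, W i ≤ A + a + b := by
    intro i hi
    have h1 : |w i| - |x i| ≤ |w i - x i| := abs_sub_abs_le_abs_sub _ _
    have h3 := hw i
    have h4 := hblinf i hi
    simp only [hW]
    linarith
  -- x is feasible
  have hxfeas : l2 (Φ.mulVec x - (Φ.mulVec x + e)) ≤ ε := by
    have heq : Φ.mulVec x - (Φ.mulVec x + e) = -e := by
      funext i; simp
    rw [heq, l2_neg]; exact he
  have hminx := hmin x hxfeas
  -- split the minimality over S and Sᶜ
  have hsplit : ∀ z : Fin d → ℝ, (∑ i, |z i| / W i)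
      = ∑ i ∈ S, |z i| / W i + ∑ i ∈ Sᶜ, |z i| / W i :=
    fun z => (Finset.sum_add_sum_compl S _).symm
  have hminS : ∑ i ∈ S, |xhat i| / W i + ∑ i ∈ Sᶜ, |xhat i| / W i
      ≤ ∑ i ∈ S, |x i| / W i + ∑ i ∈ Sᶜ, |x i| / W i := by
    rw [← hsplit, ← hsplit]; exact hminx
  -- abbreviations
  set L : ℝ := ∑ i ∈ Sᶜ, |h i| with hL
  set R : ℝ := ∑ i ∈ S, |h i| with hR
  set e₀ : ℝ := ∑ i ∈ Sᶜ, |x i| with he₀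
  have hL0 : 0 ≤ L := Finset.sum_nonneg fun i _ => abs_nonneg _
  have hR0 : 0 ≤ R := Finset.sum_nonneg fun i _ => abs_nonneg _
  have he₀0 : 0 ≤ e₀ := Finset.sum_nonneg fun i _ => abs_nonneg _
  have hl1e₀ : l1 (x - restr S x) = e₀ := by
    rw [l1, ← Finset.sum_add_sum_compl S]
    have hz : ∑ i ∈ S, |(x - restr S x) i| = 0 :=
      Finset.sum_eq_zero fun i hi => by simp [restr, hi]
    rw [hz, zero_add]
    apply Finset.sum_congr rfl
    intro i hi
    simp [restr, Finset.mem_compl.1 hi]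
  -- cone constraint
  have hcone : L ≤ C₁ * R + 2 * (A + a + b) * e₀ / a := by
    have hpt1 : ∀ i ∈ Sᶜ, |h i| / (A + a + b) - 2 * |x i| / a ≤ (|xhat i| - |x i|) / W i := by
      intro i hi
      have hiS := Finset.mem_compl.1 hi
      have e1 : |h i| / (A + a + b) ≤ |h i| / W i :=
        div_le_div_of_nonneg_left (abs_nonneg _) (hWpos i) (hWSc i hiS)
      have e2 : 2 * |x i| / W i ≤ 2 * |x i| / a :=
        div_le_div_of_nonneg_left (by positivity) ha (hWa i)
      have e3 : (|h i| - 2 * |x i|) / W i ≤ (|xhat i| - |x i|) / W i := by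
        have hn : |h i| - 2 * |x i| ≤ |xhat i| - |x i| := by
          have habs : |x i - xhat i| ≤ |x i| + |xhat i| := abs_sub _ _
          simp only [hh, Pi.sub_apply]
          linarith
        exact (div_le_div_iff_of_pos_right (hWpos i)).2 hn
      have e4 : (|h i| - 2 * |x i|) / W i = |h i| / W i - 2 * |x i| / W i := sub_div _ _ _
      linarith
    have hpt2 : ∀ i ∈ S, (|x i| - |xhat i|) / W i ≤ |h i| / (μ - A + a) := by
      intro i hi
      have hn : |x i| - |xhat i| ≤ |h i| := by
        have := abs_sub_abs_le_abs_sub (x i) (xhat i)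
        simpa only [hh, Pi.sub_apply] using this
      calc (|x i| - |xhat i|) / W i ≤ |h i| / W i := (div_le_div_iff_of_pos_right (hWpos i)).2 hn
        _ ≤ |h i| / (μ - A + a) :=
          div_le_div_of_nonneg_left (abs_nonneg _) hμa (hWS i hi)
    have hsum1 := Finset.sum_le_sum hpt1
    have hsum2 := Finset.sum_le_sum hpt2
    rw [Finset.sum_sub_distrib] at hsum1
    have hrw1 : ∑ i ∈ Sᶜ, |h i| / (A + a + b) = L / (A + a + b) := by
      rw [hL, Finset.sum_div]
    have hrw2 : ∑ i ∈ Sᶜ, 2 * |x i| / a = 2 * e₀ / a := by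
      rw [he₀, Finset.mul_sum, Finset.sum_div]
    rw [hrw1, hrw2] at hsum1
    have hrw3 : ∑ i ∈ Sᶜ, (|xhat i| - |x i|) / W i
        = ∑ i ∈ Sᶜ, |xhat i| / W i - ∑ i ∈ Sᶜ, |x i| / W i := by
      rw [← Finset.sum_sub_distrib]
      exact Finset.sum_congr rfl fun i _ => sub_div _ _ _
    rw [hrw3] at hsum1
    have hrw4 : ∑ i ∈ S, (|x i| - |xhat i|) / W i
        = ∑ i ∈ S, |x i| / W i - ∑ i ∈ S, |xhat i| / W i := by
      rw [← Finset.sum_sub_distrib]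
      exact Finset.sum_congr rfl fun i _ => sub_div _ _ _
    rw [hrw4] at hsum2
    have hrw5 : ∑ i ∈ S, |h i| / (μ - A + a) = R / (μ - A + a) := by
      rw [hR, Finset.sum_div]
    rw [hrw5] at hsum2
    have h5 : L / (A + a + b) ≤ R / (μ - A + a) + 2 * e₀ / a := by linarith
    rw [div_le_iff₀ hAab] at h5
    calc L ≤ (R / (μ - A + a) + 2 * e₀ / a) * (A + a + b) := h5
      _ = C₁ * R + 2 * (A + a + b) * e₀ / a := by rw [hC₁]; ring
  -- block decomposition of Sᶜ
  obtain ⟨J, B, hJ1, hBsub, hBle, hBeq, hBdisj, hBunion, hBdom⟩ :=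
    block_decomp h s hs1 (Sᶜ).card Sᶜ rfl
  have hB0sub : B 0 ⊆ Sᶜ := hBsub 0 hJ1
  have hSB0 : Disjoint S (B 0) := by
    rw [Finset.disjoint_left]
    intro i hiS hiB
    exact Finset.mem_compl.1 (hB0sub hiB) hiS
  set h01 : Fin d → ℝ := restr (S ∪ B 0) h with hh01
  set X : ℝ := l2 h01 with hXdef
  have hX0 : 0 ≤ X := l2_nonneg _
  have h01add : h01 = restr S h + restr (B 0) h := restr_union S (B 0) hSB0 h
  set tl : Fin d → ℝ := ∑ j ∈ Finset.Ico 1 J, restr (B j) h with htl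
  have hdecomp : h = h01 + tl := by
    have h1 : h = restr S h + restr Sᶜ h := restr_compl_add S h
    have h2 : restr Sᶜ h = ∑ j ∈ Finset.range J, restr (B j) h :=
      restr_partition B Sᶜ hBdisj hBunion h
    have h3 : ∑ j ∈ Finset.range J, restr (B j) h
        = restr (B 0) h + ∑ j ∈ Finset.Ico 1 J, restr (B j) h := by
      rw [Finset.range_eq_Ico, Finset.sum_eq_sum_Ico_succ_bot hJ1]
    rw [h01add, htl, add_assoc, ← h3, ← h2, ← h1]
  have hX2 : X ^ 2 = l2 (restr S h) ^ 2 + l2 (restr (B 0) h) ^ 2 := by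
    rw [hXdef, hh01, l2_restr_sq, l2_restr_sq, l2_restr_sq, Finset.sum_union hSB0]
  set Sig : ℝ := ∑ j ∈ Finset.Ico 1 J, l2 (restr (B j) h) with hSig
  have hSig0 : 0 ≤ Sig := Finset.sum_nonneg fun j _ => l2_nonneg _
  have hSigL : Sig ≤ (Real.sqrt s)⁻¹ * L :=
    chain h s hs1 Sᶜ J B hBle hBeq hBdisj hBunion hBdom
  -- sparsity
  have hsp01 : Sparse (2 * s) h01 := by
    apply sparse_restr
    calc (S ∪ B 0).card ≤ S.card + (B 0).card := Finset.card_union_le _ _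
      _ ≤ s + s := add_le_add hScard.le (hBle 0 hJ1)
      _ = 2 * s := by ring
  have hspS : Sparse s (restr S h) := sparse_restr _ _ hScard.le
  have hspB : ∀ j, j < J → Sparse s (restr (B j) h) := fun j hj => sparse_restr _ _ (hBle j hj)
  -- tube constraint
  have hΦh : l2 (Φ.mulVec h) ≤ 2 * ε := by
    have heq2 : Φ.mulVec h = -e + -(Φ.mulVec xhat - (Φ.mulVec x + e)) := by
      rw [hh, Matrix.mulVec_sub]
      funext i; simp; ring
    rw [heq2]
    calc l2 (-e + -(Φ.mulVec xhat - (Φ.mulVec x + e)))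
        ≤ l2 (-e) + l2 (-(Φ.mulVec xhat - (Φ.mulVec x + e))) := l2_add_le _ _
      _ = l2 e + l2 (Φ.mulVec xhat - (Φ.mulVec x + e)) := by rw [l2_neg, l2_neg]
      _ ≤ 2 * ε := by linarith
  -- restricted orthogonality bounds
  have hipj : ∀ j ∈ Finset.Ico 1 J,
      |ip (Φ.mulVec h01) (Φ.mulVec (restr (B j) h))|
        ≤ δ * (Real.sqrt 2 * X) * l2 (restr (B j) h) := by
    intro j hj
    rw [Finset.mem_Ico] at hj
    have hjJ : j < J := hj.2
    have hd1 : ∀ i, restr S h i = 0 ∨ restr (B j) h i = 0 := by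
      intro i
      by_cases hiS : i ∈ S
      · right
        have hnb : i ∉ B j := fun hib => Finset.mem_compl.1 (hBsub j hjJ hib) hiS
        simp [restr, hnb]
      · left; simp [restr, hiS]
    have hd2 : ∀ i, restr (B 0) h i = 0 ∨ restr (B j) h i = 0 := by
      intro i
      by_cases hib : i ∈ B 0
      · right
        have hdisj0j := hBdisj 0 (Finset.mem_range.2 (by omega)) j
          (Finset.mem_range.2 hjJ) (by omega)
        have hnb : i ∉ B j := fun h2 => (Finset.disjoint_left.1 hdisj0j hib) h2
        simp [restr, hnb]
      · left; simp [restr, hib]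
    have r1 := ro hδ0 hΦ _ _ hspS (hspB j hjJ) hd1
    have r2 := ro hδ0 hΦ _ _ (hspB 0 hJ1) (hspB j hjJ) hd2
    have hmv : Φ.mulVec h01 = Φ.mulVec (restr S h) + Φ.mulVec (restr (B 0) h) := by
      rw [h01add, Matrix.mulVec_add]
    have hsum2 : l2 (restr S h) + l2 (restr (B 0) h) ≤ Real.sqrt 2 * X :=
      amgm2 (l2_nonneg _) (l2_nonneg _) hX0 hX2
    calc |ip (Φ.mulVec h01) (Φ.mulVec (restr (B j) h))|
        ≤ |ip (Φ.mulVec (restr S h)) (Φ.mulVec (restr (B j) h))|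
          + |ip (Φ.mulVec (restr (B 0) h)) (Φ.mulVec (restr (B j) h))| := by
          rw [hmv, ip_add_left]; exact abs_add_le _ _
      _ ≤ δ * l2 (restr S h) * l2 (restr (B j) h)
          + δ * l2 (restr (B 0) h) * l2 (restr (B j) h) := add_le_add r1 r2
      _ = δ * (l2 (restr S h) + l2 (restr (B 0) h)) * l2 (restr (B j) h) := by ring
      _ ≤ δ * (Real.sqrt 2 * X) * l2 (restr (B j) h) := by
          apply mul_le_mul_of_nonneg_right _ (l2_nonneg _)
          exact mul_le_mul_of_nonneg_left hsum2 hδ0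
  -- key quadratic inequality
  have hiph : ip (Φ.mulVec h01) (Φ.mulVec h01)
      = ip (Φ.mulVec h01) (Φ.mulVec h)
        - ∑ j ∈ Finset.Ico 1 J, ip (Φ.mulVec h01) (Φ.mulVec (restr (B j) h)) := by
    have hΦtail : Φ.mulVec h
        = Φ.mulVec h01 + ∑ j ∈ Finset.Ico 1 J, Φ.mulVec (restr (B j) h) := by
      conv_lhs => rw [hdecomp]
      rw [Matrix.mulVec_add, htl, mulVec_sum]
    rw [hΦtail, ip_add_right, ip_sum_right]
    ring
  have hlow := (hΦ h01 hsp01).1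
  have hup : l2 (Φ.mulVec h01) ≤ Real.sqrt (1 + δ) * X :=
    rip_upper_sqrt (by linarith) hΦ h01 hsp01
  have hcs : ip (Φ.mulVec h01) (Φ.mulVec h) ≤ (Real.sqrt (1 + δ) * X) * (2 * ε) := by
    calc ip (Φ.mulVec h01) (Φ.mulVec h) ≤ l2 (Φ.mulVec h01) * l2 (Φ.mulVec h) := ip_le _ _
      _ ≤ (Real.sqrt (1 + δ) * X) * (2 * ε) :=
          mul_le_mul hup hΦh (l2_nonneg _) (mul_nonneg (Real.sqrt_nonneg _) hX0)
  have hsumip : - ∑ j ∈ Finset.Ico 1 J, ip (Φ.mulVec h01) (Φ.mulVec (restr (B j) h))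
      ≤ δ * (Real.sqrt 2 * X) * Sig := by
    calc - ∑ j ∈ Finset.Ico 1 J, ip (Φ.mulVec h01) (Φ.mulVec (restr (B j) h))
        ≤ ∑ j ∈ Finset.Ico 1 J, |ip (Φ.mulVec h01) (Φ.mulVec (restr (B j) h))| := by
          rw [← Finset.sum_neg_distrib]
          exact Finset.sum_le_sum fun j _ => neg_le_abs _
      _ ≤ ∑ j ∈ Finset.Ico 1 J, δ * (Real.sqrt 2 * X) * l2 (restr (B j) h) :=
          Finset.sum_le_sum hipj
      _ = δ * (Real.sqrt 2 * X) * Sig := by rw [hSig, Finset.mul_sum]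
  have hkey : (1 - δ) * X ^ 2
      ≤ (Real.sqrt (1 + δ) * X) * (2 * ε) + δ * (Real.sqrt 2 * X) * Sig := by
    have h9 : (1 - δ) * X ^ 2 ≤ ip (Φ.mulVec h01) (Φ.mulVec h01) := by
      rw [ip_self]; exact hlow
    rw [hiph] at h9
    linarith [hcs, hsumip]
  -- solve for X
  have hXle : X ≤ α * ε + ρ * Sig := by
    rcases eq_or_lt_of_le hX0 with hX00 | hXpos
    · rw [← hX00]
      exact add_nonneg (mul_nonneg hα0 hε0) (mul_nonneg hρ0 hSig0)
    · have h6 : (1 - δ) * X ≤ Real.sqrt (1 + δ) * (2 * ε) + δ * Real.sqrt 2 * Sig := by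
        apply cancel_mul_right hXpos
        refine hkey.trans_eq ?_
        ring
      have h8 : X ≤ (Real.sqrt (1 + δ) * (2 * ε) + δ * Real.sqrt 2 * Sig) / (1 - δ) :=
        solve_div h1δ h6
      refine h8.trans_eq ?_
      rw [hα, hρ]
      ring
  -- bound R by X
  have hRX : R ≤ Real.sqrt s * X := by
    have hcs2 := Real.sum_mul_le_sqrt_mul_sqrt S (fun _ => (1:ℝ)) (fun i => |h i|)
    have hA1 : ∑ i ∈ S, (1:ℝ) * |h i| = R := by
      rw [hR]; exact Finset.sum_congr rfl fun i _ => one_mul _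
    have hA2 : ∑ i ∈ S, ((1:ℝ)) ^ 2 = (s:ℝ) := by
      rw [Finset.sum_const, hScard]; simp
    have hA3 : ∑ i ∈ S, |h i| ^ 2 = l2 (restr S h) ^ 2 := by
      rw [l2_restr_sq]
      exact Finset.sum_congr rfl fun i _ => sq_abs _
    rw [hA1, hA2, hA3, Real.sqrt_sq (l2_nonneg _)] at hcs2
    have hl2S : l2 (restr S h) ≤ X := by
      apply le_of_sq_le (l2_nonneg _) hX0
      have hq0 := sq_nonneg (l2 (restr (B 0) h))
      linarith [hX2]
    calc R ≤ Real.sqrt s * l2 (restr S h) := hcs2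
      _ ≤ Real.sqrt s * X := mul_le_mul_of_nonneg_left hl2S hsq.le
  -- combine
  have hSig2 : Sig ≤ C₁ * X + C₂ * e₀ / a := by
    have s1 : Sig ≤ (Real.sqrt s)⁻¹ * (C₁ * (Real.sqrt s * X) + 2 * (A + a + b) * e₀ / a) := by
      refine hSigL.trans ?_
      apply mul_le_mul_of_nonneg_left _ (inv_nonneg.2 hsq.le)
      calc L ≤ C₁ * R + 2 * (A + a + b) * e₀ / a := hcone
        _ ≤ C₁ * (Real.sqrt s * X) + 2 * (A + a + b) * e₀ / a := by
            have := mul_le_mul_of_nonneg_left hRX hC₁0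
            linarith
    refine s1.trans_eq ?_
    rw [hC₂]
    field_simp
  have hXfin : X ≤ (α * ε + ρ * (C₂ * e₀ / a)) / (1 - ρ * C₁) := by
    apply solve_div h1ρC
    have h10 : ρ * Sig ≤ ρ * (C₁ * X + C₂ * e₀ / a) := mul_le_mul_of_nonneg_left hSig2 hρ0
    have h11 : ρ * (C₁ * X + C₂ * e₀ / a) = ρ * C₁ * X + ρ * (C₂ * e₀ / a) := by ring
    have h12 : (1 - ρ * C₁) * X = X - ρ * C₁ * X := by ring
    linarith [hXle]
  have hfinal : l2 h ≤ (1 + C₁) * X + C₂ * e₀ / a := by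
    have t1 : l2 h ≤ X + l2 tl := by
      rw [hdecomp]
      exact l2_add_le _ _
    have t2 : l2 tl ≤ Sig := by
      rw [htl, hSig]
      exact l2_sum_le _ _
    linarith [hSig2]
  have t3 : (1 + C₁) * X ≤ (1 + C₁) * ((α * ε + ρ * (C₂ * e₀ / a)) / (1 - ρ * C₁)) :=
    mul_le_mul_of_nonneg_left hXfin (by linarith)
  have t4 : (1 + C₁) * ((α * ε + ρ * (C₂ * e₀ / a)) / (1 - ρ * C₁)) + C₂ * e₀ / a
      = D₁ * ε + D₂ * e₀ / a := by
    rw [hD₁, hD₂]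
    field_simp
    ring
  rw [hl1e₀]
  show l2 h ≤ D₁ * ε + D₂ * e₀ / a
  linarith [hfinal, t3, t4.ge, t4.le]
end

section
/- (Noisy randomized Kaczmarz.) Let A be an m×n real matrix with nonzero rows a₁, …, a_m and with full column rank, so that ‖A⁻¹‖ := inf{ M : M‖Az‖₂ ≥ ‖z‖₂ for all z ∈ ℝⁿ } is finite. Let x ∈ ℝⁿ, b = Ax, and let r ∈ ℝ^m be an arbitrary error vector. Fix x₀ ∈ ℝⁿ, and for k ≥ 1 define x_k* = x_{k−1}* + ((b_{i_k} + r_{i_k} − ⟨a_{i_k}, x_{k−1}*⟩)/‖a_{i_k}‖₂²) a_{i_k}, where the indices i₁, i₂, … are chosen independently at random from {1, …, m}, each index i chosen with probability ‖a_i‖₂²/‖A‖_F². Then for every k, E‖x_k* − x‖₂ ≤ (1 − 1/R)^{k/2} ‖x₀ − x‖₂ + √R γ, where R = ‖A⁻¹‖² ‖A‖_F², γ = max_i |r_i|/‖a_i‖₂, and the expectation is over the random choice of the indices i₁, …, i_k (i.e., the sum over all index sequences in {1,…,m}^k weighted by the product of their selection probabilities). -/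
/-- One step of the (noisy) Kaczmarz method for the system `Ax ≈ bb + rr`, using row
`i`: project the current iterate `y` onto the solution space of
`⟨a_i, x⟩ = bb_i + rr_i`. -/
noncomputable def kaczStep {m n : ℕ} (A : Matrix (Fin m) (Fin n) ℝ) (bb rr : Fin m → ℝ)
    (i : Fin m) (y : Fin n → ℝ) : Fin n → ℝ :=
  fun j => y j + ((bb i + rr i - ∑ l, A i l * y l) / (∑ l, (A i l) ^ 2)) * A i j

/-- The Kaczmarz iterate after `k` steps, starting from `x0` and using the rows
indexed by the sequence `ω : Fin k → Fin m` (in order). -/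
noncomputable def kaczIter {m n : ℕ} (A : Matrix (Fin m) (Fin n) ℝ) (bb rr : Fin m → ℝ)
    (x0 : Fin n → ℝ) : {k : ℕ} → (Fin k → Fin m) → Fin n → ℝ
  | 0, _ => x0
  | k + 1, ω => kaczStep A bb rr (ω (Fin.last k)) (kaczIter A bb rr x0 fun j => ω j.castSucc)

lemma l2_nonneg {ι : Type*} [Fintype ι] (v : ι → ℝ) : 0 ≤ l2 v :=
  Real.sqrt_nonneg _

/-- One-step exact error identity. -/
lemma kacz_step_sq {m n : ℕ} (A : Matrix (Fin m) (Fin n) ℝ) (x : Fin n → ℝ) (r : Fin m → ℝ)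
    (i : Fin m) (y : Fin n → ℝ) (hsne : (∑ l, (A i l)^2) ≠ 0) :
    ∑ j, (kaczStep A (A.mulVec x) r i y j - x j)^2
      = (∑ j, (y j - x j)^2)
        - (∑ l, A i l * (y l - x l))^2 / (∑ l, (A i l)^2)
        + (r i)^2 / (∑ l, (A i l)^2) := by
  have hmv : A.mulVec x i = ∑ l, A i l * x l := by simp [Matrix.mulVec, dotProduct]
  set c : ℝ := (A.mulVec x i + r i - ∑ l, A i l * y l) / (∑ l, (A i l)^2) with hc
  have h1 : ∀ j, kaczStep A (A.mulVec x) r i y j - x j = (y j - x j) + c * A i j := by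
    intro j; simp only [kaczStep, hc]; ring
  have h2 : ∑ j, (kaczStep A (A.mulVec x) r i y j - x j)^2
      = (∑ j, (y j - x j)^2) + 2*c*(∑ j, A i j * (y j - x j)) + c^2 * (∑ j, (A i j)^2) := by
    simp_rw [h1]
    rw [Finset.mul_sum, Finset.mul_sum, ← Finset.sum_add_distrib, ← Finset.sum_add_distrib]
    exact Finset.sum_congr rfl fun j _ => by ring
  rw [h2]
  have h3 : (∑ l, A i l * (y l - x l)) = (∑ l, A i l * y l) - ∑ l, A i l * x l := by
    rw [← Finset.sum_sub_distrib]; exact Finset.sum_congr rfl fun l _ => by ring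
  rw [h3, hc, hmv]
  field_simp
  ring

/-- snoc decomposition of a sum over tuples. -/
lemma sum_snoc_decomp {m K : ℕ} (f : (Fin (K+1) → Fin m) → ℝ) :
    ∑ ω : Fin (K+1) → Fin m, f ω
      = ∑ ω : Fin K → Fin m, ∑ i : Fin m, f (Fin.snoc ω i) := by
  rw [← Equiv.sum_comp (Fin.snocEquiv (fun _ => Fin m)) f, Fintype.sum_prod_type,
    Finset.sum_comm]
  simp [Fin.snocEquiv]

lemma kaczIter_snoc {m n K : ℕ} (A : Matrix (Fin m) (Fin n) ℝ) (bb rr : Fin m → ℝ)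
    (x0 : Fin n → ℝ) (ω : Fin K → Fin m) (i : Fin m) :
    kaczIter A bb rr x0 (Fin.snoc ω i) = kaczStep A bb rr i (kaczIter A bb rr x0 ω) := by
  have h : (fun j : Fin K => (Fin.snoc ω i : Fin (K+1) → Fin m) j.castSucc) = ω :=
    funext fun j => by simp
  show kaczStep A bb rr ((Fin.snoc ω i : Fin (K+1) → Fin m) (Fin.last K)) _ = _
  rw [Fin.snoc_last, h]

lemma prod_snoc_weights {m K : ℕ} (g : Fin m → ℝ) (ω : Fin K → Fin m) (i : Fin m) :
    (∏ j : Fin (K+1), g ((Fin.snoc ω i : Fin (K+1) → Fin m) j))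
      = (∏ j : Fin K, g (ω j)) * g i := by
  rw [Fin.prod_univ_castSucc]
  simp

set_option maxHeartbeats 2000000 in
/-- **Noisy randomized Kaczmarz.** Let `A` have nonzero rows and full
column rank (so that `‖A⁻¹‖ = sInf {M | ∀ z, ‖z‖₂ ≤ M ‖Az‖₂}` is finite, witnessed by
the nonemptiness hypothesis). Let `b = Ax`, let `r` be an arbitrary error vector, and
run the randomized Kaczmarz method on `Ax ≈ b + r` from `x₀`, choosing each row `i`
independently with probability `‖a_i‖₂²/‖A‖_F²`. Then the expectation (sum over all
index sequences, weighted by the product of selection probabilities) of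
`‖x_k* − x‖₂` is at most `(1 − 1/R)^{k/2} ‖x₀ − x‖₂ + √R γ`, where
`R = ‖A⁻¹‖² ‖A‖_F²` and `γ = max_i |r_i|/‖a_i‖₂`. -/
theorem stmt19 (m n : ℕ) (hm : 0 < m)
    (A : Matrix (Fin m) (Fin n) ℝ)
    (hrows : ∀ i, ∃ j, A i j ≠ 0)
    (hfull : {M : ℝ | ∀ z : Fin n → ℝ, l2 z ≤ M * l2 (A.mulVec z)}.Nonempty)
    (x x0 : Fin n → ℝ) (r : Fin m → ℝ) (k : ℕ)
    (R γ : ℝ)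
    (hR : R = (sInf {M : ℝ | ∀ z : Fin n → ℝ, l2 z ≤ M * l2 (A.mulVec z)}) ^ 2 *
      (∑ i, ∑ l, (A i l) ^ 2))
    (hγ : γ = ⨆ i, |r i| / Real.sqrt (∑ l, (A i l) ^ 2)) :
    (∑ ω : Fin k → Fin m,
        (∏ j, (∑ l, (A (ω j) l) ^ 2) / (∑ i, ∑ l, (A i l) ^ 2)) *
          l2 (kaczIter A (A.mulVec x) r x0 ω - x)) ≤
      Real.sqrt ((1 - 1 / R) ^ k) * l2 (x0 - x) + Real.sqrt R * γ := by
  classical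
  have : Nonempty (Fin m) := ⟨⟨0, hm⟩⟩
  set S : Set ℝ := {M : ℝ | ∀ z : Fin n → ℝ, l2 z ≤ M * l2 (A.mulVec z)} with hSdef
  set M : ℝ := sInf S with hMdef
  set F : ℝ := ∑ i, ∑ l, (A i l) ^ 2 with hFdef
  -- row norms positive
  have hsi : ∀ i : Fin m, 0 < ∑ l, (A i l)^2 := by
    intro i
    obtain ⟨j, hj⟩ := hrows i
    exact Finset.sum_pos' (fun l _ => sq_nonneg _)
      ⟨j, Finset.mem_univ j, by positivity⟩
  have hF : 0 < F := Finset.sum_pos (fun i _ => hsi i) Finset.univ_nonempty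
  have hFne : F ≠ 0 := hF.ne'
  -- a unit test vector
  obtain ⟨j0, _⟩ := hrows ⟨0, hm⟩
  set z0 : Fin n → ℝ := fun l => if l = j0 then 1 else 0 with hz0
  have hz0sq : (∑ l, (z0 l)^2) = 1 := by
    rw [Finset.sum_eq_single j0]
    · simp [hz0]
    · intro l _ hl; simp [hz0, hl]
    · intro h; exact absurd (Finset.mem_univ j0) h
  have hl2z0 : l2 z0 = 1 := by rw [l2, hz0sq, Real.sqrt_one]
  -- lower bound for S
  have hSnonneg : ∀ b ∈ S, 0 ≤ b := by
    intro b hb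
    have h := hb z0
    rw [hl2z0] at h
    nlinarith [l2_nonneg (A.mulVec z0)]
  have hMmem : M ∈ S := by
    intro z
    obtain ⟨M0, hM0⟩ := id hfull
    rcases (l2_nonneg (A.mulVec z)).eq_or_lt with h0 | hpos
    · have hz : l2 z ≤ 0 := by
        have h := hM0 z
        rw [← h0, mul_zero] at h
        exact h
      rw [← h0, mul_zero]
      exact hz
    · have hd : l2 z / l2 (A.mulVec z) ≤ M :=
        le_csInf hfull fun b hb => (div_le_iff₀ hpos).2 (hb z)
      exact (div_le_iff₀ hpos).1 hd
  have hMnonneg : 0 ≤ M := le_csInf hfull hSnonneg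
  have hMpos : 0 < M := by
    rcases hMnonneg.lt_or_eq with h | h
    · exact h
    · exfalso
      have h2 := hMmem z0
      rw [hl2z0, ← h, zero_mul] at h2
      linarith
  -- squared form of the inverse bound
  have hMsq : ∀ z : Fin n → ℝ, (∑ l, (z l)^2) ≤ M^2 * ∑ i, (∑ l, A i l * z l)^2 := by
    intro z
    have h := hMmem z
    have hmv : ∀ i, A.mulVec z i = ∑ l, A i l * z l := by
      intro i; simp [Matrix.mulVec, dotProduct]
    have h1 : (l2 z)^2 = ∑ l, (z l)^2 := by
      rw [l2, Real.sq_sqrt (Finset.sum_nonneg fun _ _ => sq_nonneg _)]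
    have h2 : (l2 (A.mulVec z))^2 = ∑ i, (∑ l, A i l * z l)^2 := by
      rw [l2, Real.sq_sqrt (Finset.sum_nonneg fun _ _ => sq_nonneg _)]
      exact Finset.sum_congr rfl fun i _ => by rw [hmv]
    calc (∑ l, (z l)^2) = (l2 z)^2 := h1.symm
      _ ≤ (M * l2 (A.mulVec z))^2 := pow_le_pow_left₀ (l2_nonneg z) h 2
      _ = M^2 * (l2 (A.mulVec z))^2 := by ring
      _ = M^2 * ∑ i, (∑ l, A i l * z l)^2 := by rw [h2]
  -- R ≥ 1 and R > 0
  have hRpos : 0 < R := by rw [hR]; positivity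
  have hRne : R ≠ 0 := hRpos.ne'
  have hR1 : 1 ≤ R := by
    have h1 := hMsq z0
    rw [hz0sq] at h1
    have h2 : ∀ i : Fin m, (∑ l, A i l * z0 l)^2 ≤ (∑ l, (A i l)^2) := by
      intro i
      have := Finset.sum_mul_sq_le_sq_mul_sq Finset.univ (fun l => A i l) z0
      rw [hz0sq, mul_one] at this
      exact this
    have h3 : (∑ i, (∑ l, A i l * z0 l)^2) ≤ F := Finset.sum_le_sum fun i _ => h2 i
    rw [hR]
    nlinarith
  have hα0 : 0 ≤ 1 - 1/R := by
    have : 1/R ≤ 1 := by rw [div_le_one hRpos]; exact hR1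
    linarith
  -- γ facts
  have hsqrt_si : ∀ i : Fin m, 0 < Real.sqrt (∑ l, (A i l)^2) :=
    fun i => Real.sqrt_pos.2 (hsi i)
  have hbdd : BddAbove (Set.range fun i : Fin m => |r i| / Real.sqrt (∑ l, (A i l)^2)) :=
    Set.Finite.bddAbove (Set.finite_range _)
  have hγle : ∀ i : Fin m, |r i| / Real.sqrt (∑ l, (A i l)^2) ≤ γ := by
    intro i; rw [hγ]; exact le_ciSup hbdd i
  have hγ0 : 0 ≤ γ := le_trans (by positivity) (hγle ⟨0, hm⟩)
  have hγi : ∀ i : Fin m, (r i)^2 ≤ (∑ l, (A i l)^2) * γ^2 := by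
    intro i
    have h := hγle i
    rw [div_le_iff₀ (hsqrt_si i)] at h
    have h2 : |r i|^2 ≤ (γ * Real.sqrt (∑ l, (A i l)^2))^2 := by
      apply sq_le_sq' _ h
      nlinarith [abs_nonneg (r i)]
    rw [sq_abs] at h2
    nlinarith [Real.sq_sqrt (hsi i).le]
  -- one-step expectation bound
  have hstep : ∀ y : Fin n → ℝ,
      ∑ i, ((∑ l, (A i l)^2)/F) * (∑ j, (kaczStep A (A.mulVec x) r i y j - x j)^2)
        ≤ (1 - 1/R) * (∑ j, (y j - x j)^2) + γ^2 := by
    intro y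
    have hE : (0:ℝ) ≤ ∑ j, (y j - x j)^2 := Finset.sum_nonneg fun _ _ => sq_nonneg _
    have hsum : ∑ i, ((∑ l, (A i l)^2)/F) * (∑ j, (kaczStep A (A.mulVec x) r i y j - x j)^2)
        = (∑ j, (y j - x j)^2)
          - (∑ i, (∑ l, A i l * (y l - x l))^2)/F
          + (∑ i, (r i)^2)/F := by
      have hterm : ∀ i : Fin m,
          ((∑ l, (A i l)^2)/F) * (∑ j, (kaczStep A (A.mulVec x) r i y j - x j)^2)
            = (∑ l, (A i l)^2) * (∑ j, (y j - x j)^2) / F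
              - (∑ l, A i l * (y l - x l))^2 / F + (r i)^2 / F := by
        intro i
        rw [kacz_step_sq A x r i y (hsi i).ne']
        have hsine : (∑ l, (A i l)^2) ≠ 0 := (hsi i).ne'
        field_simp
      rw [Finset.sum_congr rfl fun i _ => hterm i]
      rw [Finset.sum_add_distrib, Finset.sum_sub_distrib, ← Finset.sum_div, ← Finset.sum_div,
        ← Finset.sum_div, ← Finset.sum_mul]
      rw [← hFdef]
      field_simp
    rw [hsum]
    have h1 : (∑ j, (y j - x j)^2)/R ≤ (∑ i, (∑ l, A i l * (y l - x l))^2)/F := by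
      rw [div_le_div_iff₀ hRpos hF]
      have h := hMsq (fun l => y l - x l)
      rw [hR]
      nlinarith [Finset.sum_nonneg (fun i (_ : i ∈ Finset.univ) =>
        sq_nonneg (∑ l, A i l * (y l - x l)))]
    have h2 : (∑ i, (r i)^2)/F ≤ γ^2 := by
      rw [div_le_iff₀ hF]
      calc ∑ i, (r i)^2 ≤ ∑ i, (∑ l, (A i l)^2) * γ^2 := Finset.sum_le_sum fun i _ => hγi i
        _ = γ^2 * F := by rw [← Finset.sum_mul, hFdef]; ring
    have h3 : (1 - 1/R) * (∑ j, (y j - x j)^2)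
        = (∑ j, (y j - x j)^2) - (∑ j, (y j - x j)^2)/R := by
      field_simp
    linarith
  -- total probability is 1
  have hP1 : ∀ K : ℕ,
      (∑ ω : Fin K → Fin m, ∏ j, (∑ l, (A (ω j) l)^2)/F) = 1 := by
    intro K
    induction K with
    | zero => simp
    | succ K ih =>
      rw [sum_snoc_decomp]
      have : ∀ (ω : Fin K → Fin m) (i : Fin m),
          (∏ j : Fin (K+1), (∑ l, (A ((Fin.snoc ω i : Fin (K+1) → Fin m) j) l)^2)/F)
            = (∏ j : Fin K, (∑ l, (A (ω j) l)^2)/F) * ((∑ l, (A i l)^2)/F) :=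
        fun ω i => prod_snoc_weights (fun a => (∑ l, (A a l)^2)/F) ω i
      calc ∑ ω : Fin K → Fin m, ∑ i : Fin m,
            (∏ j : Fin (K+1), (∑ l, (A ((Fin.snoc ω i : Fin (K+1) → Fin m) j) l)^2)/F)
          = ∑ ω : Fin K → Fin m,
            (∏ j : Fin K, (∑ l, (A (ω j) l)^2)/F) * ∑ i : Fin m, (∑ l, (A i l)^2)/F := by
            refine Finset.sum_congr rfl fun ω _ => ?_
            rw [Finset.mul_sum]
            exact Finset.sum_congr rfl fun i _ => this ω i
        _ = 1 := by
            rw [← Finset.sum_div, ← hFdef, div_self hFne]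
            simpa using ih
  have hPnonneg : ∀ {K : ℕ} (ω : Fin K → Fin m),
      0 ≤ ∏ j, (∑ l, (A (ω j) l)^2)/F :=
    fun ω => Finset.prod_nonneg fun j _ => by positivity
  have hqnonneg : ∀ {K : ℕ} (ω : Fin K → Fin m),
      0 ≤ ∑ j, (kaczIter A (A.mulVec x) r x0 ω j - x j)^2 :=
    fun ω => Finset.sum_nonneg fun _ _ => sq_nonneg _
  -- main induction: expected squared error
  have key : ∀ K : ℕ,
      (∑ ω : Fin K → Fin m, (∏ j, (∑ l, (A (ω j) l)^2)/F) *
        (∑ j, (kaczIter A (A.mulVec x) r x0 ω j - x j)^2))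
      ≤ (1 - 1/R)^K * (∑ j, (x0 j - x j)^2) + R * γ^2 := by
    intro K
    induction K with
    | zero =>
      rw [Fintype.sum_unique]
      have h0 : ∀ j, kaczIter A (A.mulVec x) r x0 (default : Fin 0 → Fin m) j - x j
          = x0 j - x j := fun j => rfl
      simp only [h0, Finset.univ_eq_empty, Finset.prod_empty, one_mul, pow_zero]
      have hRγ : 0 ≤ R * γ^2 := by positivity
      linarith
    | succ K ih =>
      rw [sum_snoc_decomp]
      have hstep' : ∀ ω : Fin K → Fin m,
          ∑ i : Fin m, (∏ j : Fin (K+1), (∑ l, (A ((Fin.snoc ω i : Fin (K+1) → Fin m) j) l)^2)/F) *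
            (∑ j, (kaczIter A (A.mulVec x) r x0 (Fin.snoc ω i) j - x j)^2)
          ≤ (∏ j : Fin K, (∑ l, (A (ω j) l)^2)/F) *
            ((1 - 1/R) * (∑ j, (kaczIter A (A.mulVec x) r x0 ω j - x j)^2) + γ^2) := by
        intro ω
        have heq : ∀ i : Fin m,
            (∏ j : Fin (K+1), (∑ l, (A ((Fin.snoc ω i : Fin (K+1) → Fin m) j) l)^2)/F) *
              (∑ j, (kaczIter A (A.mulVec x) r x0 (Fin.snoc ω i) j - x j)^2)
            = (∏ j : Fin K, (∑ l, (A (ω j) l)^2)/F) *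
              (((∑ l, (A i l)^2)/F) *
                (∑ j, (kaczStep A (A.mulVec x) r i (kaczIter A (A.mulVec x) r x0 ω) j - x j)^2)) := by
          intro i
          rw [prod_snoc_weights (fun a => (∑ l, (A a l)^2)/F) ω i, kaczIter_snoc]
          ring
        rw [Finset.sum_congr rfl fun i _ => heq i, ← Finset.mul_sum]
        exact mul_le_mul_of_nonneg_left (hstep _) (hPnonneg ω)
      calc ∑ ω : Fin K → Fin m, ∑ i : Fin m,
            (∏ j : Fin (K+1), (∑ l, (A ((Fin.snoc ω i : Fin (K+1) → Fin m) j) l)^2)/F) *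
              (∑ j, (kaczIter A (A.mulVec x) r x0 (Fin.snoc ω i) j - x j)^2)
          ≤ ∑ ω : Fin K → Fin m, (∏ j : Fin K, (∑ l, (A (ω j) l)^2)/F) *
              ((1 - 1/R) * (∑ j, (kaczIter A (A.mulVec x) r x0 ω j - x j)^2) + γ^2) :=
            Finset.sum_le_sum fun ω _ => hstep' ω
        _ = (1 - 1/R) * (∑ ω : Fin K → Fin m, (∏ j, (∑ l, (A (ω j) l)^2)/F) *
              (∑ j, (kaczIter A (A.mulVec x) r x0 ω j - x j)^2))
            + γ^2 * (∑ ω : Fin K → Fin m, ∏ j, (∑ l, (A (ω j) l)^2)/F) := by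
            rw [Finset.mul_sum, Finset.mul_sum, ← Finset.sum_add_distrib]
            exact Finset.sum_congr rfl fun ω _ => by ring
        _ ≤ (1 - 1/R) * ((1 - 1/R)^K * (∑ j, (x0 j - x j)^2) + R * γ^2) + γ^2 * 1 := by
            rw [hP1 K]
            have := mul_le_mul_of_nonneg_left ih hα0
            linarith
        _ = (1 - 1/R)^(K+1) * (∑ j, (x0 j - x j)^2) + R * γ^2 := by
            have hRR : 1 / R * R = 1 := one_div_mul_cancel hRne
            linear_combination (-(γ^2)) * hRR
  -- Cauchy–Schwarz to pass from squared to plain expectation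
  have hiterl2 : ∀ ω : Fin k → Fin m,
      l2 (kaczIter A (A.mulVec x) r x0 ω - x)
        = Real.sqrt (∑ j, (kaczIter A (A.mulVec x) r x0 ω j - x j)^2) := by
    intro ω; rw [l2]; congr 1
  set B : ℝ := (1 - 1/R)^k * (∑ j, (x0 j - x j)^2) + R * γ^2 with hB
  have hBnonneg : 0 ≤ B := by
    have : (0:ℝ) ≤ ∑ j, (x0 j - x j)^2 := Finset.sum_nonneg fun _ _ => sq_nonneg _
    positivity
  have hLHSnonneg : 0 ≤ ∑ ω : Fin k → Fin m, (∏ j, (∑ l, (A (ω j) l)^2)/F) *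
      l2 (kaczIter A (A.mulVec x) r x0 ω - x) :=
    Finset.sum_nonneg fun ω _ => mul_nonneg (hPnonneg ω) (Real.sqrt_nonneg _)
  have hCS : (∑ ω : Fin k → Fin m, (∏ j, (∑ l, (A (ω j) l)^2)/F) *
      l2 (kaczIter A (A.mulVec x) r x0 ω - x))^2 ≤ B := by
    have h := Finset.sum_mul_sq_le_sq_mul_sq Finset.univ
      (fun ω : Fin k → Fin m => Real.sqrt (∏ j, (∑ l, (A (ω j) l)^2)/F))
      (fun ω : Fin k → Fin m => Real.sqrt (∏ j, (∑ l, (A (ω j) l)^2)/F) *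
        Real.sqrt (∑ j, (kaczIter A (A.mulVec x) r x0 ω j - x j)^2))
    have e1 : ∀ ω : Fin k → Fin m,
        Real.sqrt (∏ j, (∑ l, (A (ω j) l)^2)/F) *
          (Real.sqrt (∏ j, (∑ l, (A (ω j) l)^2)/F) *
            Real.sqrt (∑ j, (kaczIter A (A.mulVec x) r x0 ω j - x j)^2))
        = (∏ j, (∑ l, (A (ω j) l)^2)/F) * l2 (kaczIter A (A.mulVec x) r x0 ω - x) := by
      intro ω
      rw [← mul_assoc, Real.mul_self_sqrt (hPnonneg ω), hiterl2]
    have e2 : ∀ ω : Fin k → Fin m,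
        (Real.sqrt (∏ j, (∑ l, (A (ω j) l)^2)/F))^2 = ∏ j, (∑ l, (A (ω j) l)^2)/F :=
      fun ω => Real.sq_sqrt (hPnonneg ω)
    have e3 : ∀ ω : Fin k → Fin m,
        (Real.sqrt (∏ j, (∑ l, (A (ω j) l)^2)/F) *
          Real.sqrt (∑ j, (kaczIter A (A.mulVec x) r x0 ω j - x j)^2))^2
        = (∏ j, (∑ l, (A (ω j) l)^2)/F) * (∑ j, (kaczIter A (A.mulVec x) r x0 ω j - x j)^2) := by
      intro ω
      rw [mul_pow, Real.sq_sqrt (hPnonneg ω), Real.sq_sqrt (hqnonneg ω)]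
    rw [Finset.sum_congr rfl fun ω _ => e1 ω, Finset.sum_congr rfl fun ω _ => e2 ω,
      Finset.sum_congr rfl fun ω _ => e3 ω, hP1 k, one_mul] at h
    exact h.trans (key k)
  have hLB : (∑ ω : Fin k → Fin m, (∏ j, (∑ l, (A (ω j) l)^2)/F) *
      l2 (kaczIter A (A.mulVec x) r x0 ω - x)) ≤ Real.sqrt B := by
    have h := Real.sqrt_le_sqrt hCS
    rwa [Real.sqrt_sq hLHSnonneg] at h
  have hE0 : (0:ℝ) ≤ ∑ j, (x0 j - x j)^2 := Finset.sum_nonneg fun _ _ => sq_nonneg _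
  have ha : 0 ≤ (1 - 1/R)^k * (∑ j, (x0 j - x j)^2) :=
    mul_nonneg (pow_nonneg hα0 k) hE0
  have hb : 0 ≤ R * γ^2 := by positivity
  have hsplit : Real.sqrt B
      ≤ Real.sqrt ((1 - 1/R)^k * (∑ j, (x0 j - x j)^2)) + Real.sqrt (R * γ^2) := by
    have h1 : B ≤ (Real.sqrt ((1 - 1/R)^k * (∑ j, (x0 j - x j)^2)) + Real.sqrt (R * γ^2))^2 := by
      rw [hB]
      nlinarith [Real.sq_sqrt ha, Real.sq_sqrt hb,
        Real.sqrt_nonneg ((1 - 1/R)^k * (∑ j, (x0 j - x j)^2)), Real.sqrt_nonneg (R * γ^2),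
        mul_nonneg (Real.sqrt_nonneg ((1 - 1/R)^k * (∑ j, (x0 j - x j)^2)))
          (Real.sqrt_nonneg (R * γ^2))]
    calc Real.sqrt B
        ≤ Real.sqrt ((Real.sqrt ((1 - 1/R)^k * (∑ j, (x0 j - x j)^2)) + Real.sqrt (R * γ^2))^2) :=
          Real.sqrt_le_sqrt h1
      _ = _ := Real.sqrt_sq (by positivity)
  have e4 : Real.sqrt ((1 - 1/R)^k * (∑ j, (x0 j - x j)^2))
      = Real.sqrt ((1 - 1/R)^k) * l2 (x0 - x) := by
    rw [Real.sqrt_mul (pow_nonneg hα0 k)]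
    congr 1
  have e5 : Real.sqrt (R * γ^2) = Real.sqrt R * γ := by
    rw [Real.sqrt_mul hRpos.le, Real.sqrt_sq hγ0]
  calc (∑ ω : Fin k → Fin m, (∏ j, (∑ l, (A (ω j) l)^2)/F) *
        l2 (kaczIter A (A.mulVec x) r x0 ω - x))
      ≤ Real.sqrt B := hLB
    _ ≤ Real.sqrt ((1 - 1/R)^k * (∑ j, (x0 j - x j)^2)) + Real.sqrt (R * γ^2) := hsplit
    _ = Real.sqrt ((1 - 1/R)^k) * l2 (x0 - x) + Real.sqrt R * γ := by rw [e4, e5]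
end
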